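/- arXiv:1011.6554 — 2 statements merged into one kernel-verified Lean document; each statement's English description precedes it below -/
import Mathlib

section
/- Let (T,r) be a rooted tree of type A. Then (CT,s) is a rooted tree of type A with m(CT) = 8 m(T) + 3 m_0(T) and m_0(CT) = 5 m(T) + 3 m_0(T). Consequently, for every k ≥ 0: m(C^k L) = G_{k+1}, m_0(C^k L) = G_{k+1} − 3 G_k, m(C^k F) = 3 G_{k+1} − 3 G_k, and m_0(C^k F) = 2 G_{k+1} − G_k, where (G_j) is defined by G_0 = 0, G_1 = 1 and G_{j+1} = 11 G_j − 9 G_{j−1}. -/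
namespace PaperMM

open SimpleGraph

/-- `M` is a matching of `G`: a set of edges of `G` that are pairwise disjoint. -/
def IsMatchingSet {V : Type} (G : SimpleGraph V) (M : Set (Sym2 V)) : Prop :=
  M ⊆ G.edgeSet ∧ M.Pairwise fun e f => ∀ v : V, ¬(v ∈ e ∧ v ∈ f)

/-- The matching number `μ(G)`: the maximum cardinality of a matching of `G`. -/
noncomputable def matchNum {V : Type} (G : SimpleGraph V) : ℕ :=
  sSup {n | ∃ M : Set (Sym2 V), IsMatchingSet G M ∧ M.ncard = n}

/-- The set of maximum matchings of `G`. -/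
def MaximumMatchings {V : Type} (G : SimpleGraph V) : Set (Set (Sym2 V)) :=
  {M | IsMatchingSet G M ∧ M.ncard = matchNum G}

/-- `m(G)`: the number of maximum matchings of `G`. -/
noncomputable def mm {V : Type} (G : SimpleGraph V) : ℕ := (MaximumMatchings G).ncard

/-- The matching `M` covers the vertex `v`. -/
def Covers {V : Type} (M : Set (Sym2 V)) (v : V) : Prop := ∃ e ∈ M, v ∈ e

/-- `v` is of type A in `G`: some maximum matching of `G` does not cover `v`. -/
def TypeA {V : Type} (G : SimpleGraph V) (v : V) : Prop :=
  ∃ M ∈ MaximumMatchings G, ¬ Covers M v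

/-- `v` is of type B in `G`: every maximum matching of `G` covers `v`. -/
def TypeB {V : Type} (G : SimpleGraph V) (v : V) : Prop := ¬ TypeA G v

/-- `G` has a perfect matching. -/
def HasPerfectMatching {V : Type} (G : SimpleGraph V) : Prop :=
  ∃ M : Set (Sym2 V), IsMatchingSet G M ∧ ∀ v, Covers M v

/-- The degree of `v` in `G`. -/
noncomputable def degS {V : Type} (G : SimpleGraph V) (v : V) : ℕ := (G.neighborSet v).ncard

/-- `G` is an optimal tree: a tree maximising `m` among all trees of the same order. -/
def OptimalTree {V : Type} [Fintype V] (G : SimpleGraph V) : Prop :=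
  G.IsTree ∧ ∀ H : SimpleGraph (Fin (Fintype.card V)), H.IsTree → mm H ≤ mm G

/-- The vertex set of the connected component of `s` in `G - st`. -/
def sideSet {V : Type} (G : SimpleGraph V) (s t : V) : Set V :=
  {v | (G.deleteEdges {s(s, t)}).Reachable s v}

/-- The connected component of `s` in `G - st`, as a graph. -/
def sideGraph {V : Type} (G : SimpleGraph V) (s t : V) :
    SimpleGraph (sideSet G s t) :=
  (G.deleteEdges {s(s, t)}).induce (sideSet G s t)

theorem mem_sideSet_self {V : Type} (G : SimpleGraph V) (s t : V) : s ∈ sideSet G s t :=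
  SimpleGraph.Reachable.refl s

/-- The root of the component of `s` in `G - st`, i.e. `s` itself. -/
def sideRoot {V : Type} (G : SimpleGraph V) (s t : V) : sideSet G s t :=
  ⟨s, mem_sideSet_self G s t⟩

/-- `μ(T_s)` where `T_s` is the component of `s` in `G - st`. -/
noncomputable def sideMu {V : Type} (G : SimpleGraph V) (s t : V) : ℕ := matchNum (sideGraph G s t)

/-- `m(T_s)` where `T_s` is the component of `s` in `G - st`. -/
noncomputable def sideM {V : Type} (G : SimpleGraph V) (s t : V) : ℕ := mm (sideGraph G s t)

/-- `μ(T_s − s)` where `T_s` is the component of `s` in `G - st`. -/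
noncomputable def sideMuDel {V : Type} (G : SimpleGraph V) (s t : V) : ℕ :=
  matchNum ((G.deleteEdges {s(s, t)}).induce (sideSet G s t \ {s}))

/-- `m(T_s − s)` where `T_s` is the component of `s` in `G - st`. -/
noncomputable def sideMDel {V : Type} (G : SimpleGraph V) (s t : V) : ℕ :=
  mm ((G.deleteEdges {s(s, t)}).induce (sideSet G s t \ {s}))

/-- A rooted graph: a vertex type, a graph on it, and a root vertex. -/
structure RGraph : Type 1 where
  V : Type
  G : SimpleGraph V
  root : V

/-- `m(T)` for a rooted graph. -/
noncomputable def RGraph.m (T : RGraph) : ℕ := mm T.G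

/-- `m_0(T) = m(T − r)` for a rooted graph with root `r`. -/
noncomputable def RGraph.m0 (T : RGraph) : ℕ := mm (T.G.induce {v | v ≠ T.root})

/-- `m_1(T)`: the number of maximum matchings of `G` covering `r`. -/
noncomputable def mmCover {V : Type} (G : SimpleGraph V) (r : V) : ℕ :=
  {M | M ∈ MaximumMatchings G ∧ Covers M r}.ncard

/-- The order (number of vertices) of a rooted graph. -/
noncomputable def RGraph.order (T : RGraph) : ℕ := Nat.card T.V

/-- Isomorphism of rooted graphs: a graph isomorphism mapping root to root. -/
def RGraph.RIso (T T' : RGraph) : Prop :=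
  ∃ φ : T.G ≃g T'.G, φ T.root = T'.root

/-- The one-vertex rooted tree `L`. -/
def rL : RGraph := ⟨PUnit, ⊥, PUnit.unit⟩

/-- The fork `F`: the root `0` is adjacent to `1`, which is adjacent to the leaves `2`, `3`. -/
def rF : RGraph :=
  ⟨Fin 4, SimpleGraph.fromRel (fun a b => (a = 0 ∧ b = 1) ∨ (a = 1 ∧ b = 2) ∨ (a = 1 ∧ b = 3)), 0⟩

/-- The rooted tree `B₂*`: a single edge rooted at one endpoint. -/
def rB2 : RGraph := ⟨Fin 2, SimpleGraph.fromRel (fun a b => a = 0 ∧ b = 1), 0⟩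

/-- The rooted tree `A₃*`: a path on three vertices rooted at an endpoint. -/
def rA3 : RGraph :=
  ⟨Fin 3, SimpleGraph.fromRel (fun a b => (a = 0 ∧ b = 1) ∨ (a = 1 ∧ b = 2)), 0⟩

/-- The `k`-claw: the star `K_{1,k}` rooted at its center. -/
def claw (k : ℕ) : RGraph :=
  ⟨Fin (k + 1), SimpleGraph.fromRel (fun a b => a = 0 ∧ b ≠ 0), 0⟩

/-- The chain construction `C`: seven new vertices are added to the rooted tree `T`;
`Sum.inr 0` is the new root `s`, `Sum.inr 1` is the vertex `b` adjacent to `s`, to the new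
leaf `Sum.inr 2`, to the root `Sum.inr 3` of a new fork (with center `Sum.inr 4` and leaves
`Sum.inr 5`, `Sum.inr 6`), and to the old root of `T`. -/
def consC (T : RGraph) : RGraph where
  V := T.V ⊕ Fin 7
  G := SimpleGraph.fromRel (fun a b =>
    (∃ x y, T.G.Adj x y ∧ a = Sum.inl x ∧ b = Sum.inl y) ∨
    (a = Sum.inr 0 ∧ b = Sum.inr 1) ∨
    (a = Sum.inr 1 ∧ b = Sum.inr 2) ∨
    (a = Sum.inr 1 ∧ b = Sum.inr 3) ∨
    (a = Sum.inr 3 ∧ b = Sum.inr 4) ∨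
    (a = Sum.inr 4 ∧ b = Sum.inr 5) ∨
    (a = Sum.inr 4 ∧ b = Sum.inr 6) ∨
    (a = Sum.inr 1 ∧ b = Sum.inl T.root))
  root := Sum.inr 0

/-- `hang T S`: the disjoint union of rooted graphs `T` and `S` together with an edge
joining their roots; the root of the result is the root of `T`. -/
def hang (T S : RGraph) : RGraph where
  V := T.V ⊕ S.V
  G := SimpleGraph.fromRel (fun a b =>
    (∃ x y, T.G.Adj x y ∧ a = Sum.inl x ∧ b = Sum.inl y) ∨
    (∃ x y, S.G.Adj x y ∧ a = Sum.inr x ∧ b = Sum.inr y) ∨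
    (a = Sum.inl T.root ∧ b = Sum.inr S.root))
  root := Sum.inl T.root

/-- The rooted subtree of `G` cut off by the edge `st` on the side of `s`, rooted at `s`. -/
def sideRG {V : Type} (G : SimpleGraph V) (s t : V) : RGraph :=
  ⟨sideSet G s t, sideGraph G s t, sideRoot G s t⟩

/-- `y` lies on the path from `x` to the root of `T`. -/
def OnRootPath (T : RGraph) (x y : T.V) : Prop := ∀ p : T.G.Walk x T.root, y ∈ p.support

/-- The rooted graph `T` contains a `k`-claw: either `T` itself is a `k`-claw, or
there is an edge `xy` of `T` with `y` on the path from `x` to the root such that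
the component of `x` in `T − xy`, rooted at `x`, is a `k`-claw. -/
def ContainsClaw (T : RGraph) (k : ℕ) : Prop :=
  T.RIso (claw k) ∨
  ∃ x y : T.V, T.G.Adj x y ∧ OnRootPath T x y ∧ (sideRG T.G x y).RIso (claw k)

/-- The vertex set of the branch of the rooted graph `(G, r)` containing the
neighbour `x` of `r`: all vertices reachable from `x` avoiding `r`. -/
def branchSet {V : Type} (G : SimpleGraph V) (r x : V) : Set V :=
  {v | ∃ p : G.Walk x v, r ∉ p.support}

/-- `m` of the branch of `(G, r)` at the neighbour `x`. -/
noncomputable def branchM {V : Type} (G : SimpleGraph V) (r x : V) : ℕ :=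
  mm (G.induce (branchSet G r x))

/-- `m_0` of the branch of `(G, r)` at the neighbour `x` (the branch is rooted at `x`). -/
noncomputable def branchM0 {V : Type} (G : SimpleGraph V) (r x : V) : ℕ :=
  mm (G.induce (branchSet G r x \ {x}))

/-- The branch of `(G, r)` at the neighbour `x`, rooted at `x`, is of type A. -/
def BranchTypeA {V : Type} (G : SimpleGraph V) (r x : V) : Prop :=
  ∃ h : x ∈ branchSet G r x, TypeA (G.induce (branchSet G r x)) ⟨x, h⟩

/-- The branch of `(G, r)` at the neighbour `x`, rooted at `x`, is of type B. -/
def BranchTypeB {V : Type} (G : SimpleGraph V) (r x : V) : Prop :=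
  ∃ h : x ∈ branchSet G r x, TypeB (G.induce (branchSet G r x)) ⟨x, h⟩

/-- The bipartition condition for rooted trees: a one-vertex rooted tree fulfils it,
and a rooted tree fulfils it if all of its branches (each rooted at the corresponding
neighbour of the root) fulfil it and have type different from the type of the root. -/
inductive BipCond : {V : Type} → SimpleGraph V → V → Prop where
  | single {V : Type} (G : SimpleGraph V) (r : V) (h : ∀ v : V, v = r) : BipCond G r
  | node {V : Type} (G : SimpleGraph V) (r : V)
      (hrec : ∀ (x : V), G.Adj r x → ∀ (hm : x ∈ branchSet G r x),
        BipCond (G.induce (branchSet G r x)) ⟨x, hm⟩)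
      (htype : ∀ (x : V), G.Adj r x → ∀ (hm : x ∈ branchSet G r x),
        ¬ (TypeA G r ↔ TypeA (G.induce (branchSet G r x)) ⟨x, hm⟩)) :
      BipCond G r

/-- The integer sequence `G_j` with `G_0 = 0`, `G_1 = 1`, `G_{j+2} = 11 G_{j+1} − 9 G_j`. -/
def Gseq : ℕ → ℤ
  | 0 => 0
  | 1 => 1
  | (n + 2) => 11 * Gseq (n + 1) - 9 * Gseq n

/-- Attach one new pendant vertex to the vertex `w` of `H`. -/
def addLeaf {W : Type} (H : SimpleGraph W) (w : W) : SimpleGraph (W ⊕ Unit) :=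
  SimpleGraph.fromRel (fun a b =>
    (∃ x y, H.Adj x y ∧ a = Sum.inl x ∧ b = Sum.inl y) ∨
    (a = Sum.inl w ∧ b = Sum.inr ()))

/-- The 6-vertex spider with legs of lengths 1, 1 and 3 attached to the center `0`. -/
def spider6 : SimpleGraph (Fin 6) :=
  SimpleGraph.fromRel (fun a b =>
    (a = 0 ∧ b = 1) ∨ (a = 0 ∧ b = 2) ∨ (a = 0 ∧ b = 3) ∨ (a = 3 ∧ b = 4) ∨ (a = 4 ∧ b = 5))


set_option maxHeartbeats 1000000

attribute [reducible] consC

section basics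
variable {V : Type} [Finite V] (G : SimpleGraph V)

lemma msets_bdd : BddAbove {n | ∃ M : Set (Sym2 V), IsMatchingSet G M ∧ M.ncard = n} := by
  refine ⟨Nat.card (Sym2 V), fun n ⟨M, _, hM⟩ => ?_⟩
  rw [← hM, ← Set.ncard_univ]
  exact Set.ncard_le_ncard (Set.subset_univ M) Set.finite_univ

omit [Finite V] in
lemma msets_nonempty : {n | ∃ M : Set (Sym2 V), IsMatchingSet G M ∧ M.ncard = n}.Nonempty :=
  ⟨0, ∅, ⟨Set.empty_subset _, Set.pairwise_empty _⟩, Set.ncard_empty _⟩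

lemma exists_max_matching : ∃ M, M ∈ MaximumMatchings G := by
  obtain ⟨M, hM, hc⟩ := Nat.sSup_mem (msets_nonempty G) (msets_bdd G)
  exact ⟨M, hM, hc⟩

lemma ncard_le_matchNum {M : Set (Sym2 V)} (h : IsMatchingSet G M) : M.ncard ≤ matchNum G :=
  le_csSup (msets_bdd G) ⟨M, h, rfl⟩

omit [Finite V] in
lemma matchNum_le {n : ℕ} (h : ∀ M : Set (Sym2 V), IsMatchingSet G M → M.ncard ≤ n) :
    matchNum G ≤ n :=
  csSup_le (msets_nonempty G) (by rintro k ⟨M, hM, rfl⟩; exact h M hM)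

end basics

section sym2img
variable {W V : Type} {ι : W → V}

lemma pairwise_image (hι : Function.Injective ι) {N : Set (Sym2 W)}
    (hN : N.Pairwise fun e f => ∀ v, ¬(v ∈ e ∧ v ∈ f)) :
    (Sym2.map ι '' N).Pairwise fun e f => ∀ v : V, ¬(v ∈ e ∧ v ∈ f) := by
  rintro _ ⟨e, he, rfl⟩ _ ⟨f, hf, rfl⟩ hne v ⟨hv1, hv2⟩
  have hef : e ≠ f := fun h => hne (by rw [h])
  rw [Sym2.mem_map] at hv1 hv2
  obtain ⟨a, ha, rfl⟩ := hv1
  obtain ⟨b, hb, hba⟩ := hv2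
  cases hι hba
  exact hN he hf hef a ⟨ha, hb⟩

lemma covers_image {N : Set (Sym2 W)} {v : V} (hv : v ∉ Set.range ι) :
    ¬ Covers (Sym2.map ι '' N) v := by
  rintro ⟨_, ⟨e, _, rfl⟩, hv2⟩
  rw [Sym2.mem_map] at hv2
  obtain ⟨a, _, rfl⟩ := hv2
  exact hv ⟨a, rfl⟩

lemma pairwise_preimage (hι : Function.Injective ι) {M : Set (Sym2 V)}
    (hM : M.Pairwise fun e f => ∀ v, ¬(v ∈ e ∧ v ∈ f)) {N : Set (Sym2 W)}
    (hN : ∀ e ∈ N, Sym2.map ι e ∈ M) :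
    N.Pairwise fun e f => ∀ v : W, ¬(v ∈ e ∧ v ∈ f) := by
  intro e he f hf hef v ⟨hv1, hv2⟩
  have h1 : Sym2.map ι e ≠ Sym2.map ι f := fun h => hef (Sym2.map.injective hι h)
  exact hM (hN e he) (hN f hf) h1 (ι v)
    ⟨Sym2.mem_map.2 ⟨v, hv1, rfl⟩, Sym2.mem_map.2 ⟨v, hv2, rfl⟩⟩

end sym2img

section del
variable {V : Type} [Finite V] (G : SimpleGraph V) (r : V)

omit [Finite V] in
lemma isMatchingSet_del_iff (N : Set (Sym2 {v : V | v ≠ r})) :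
    IsMatchingSet (G.induce {v : V | v ≠ r}) N ↔
      IsMatchingSet G (Sym2.map Subtype.val '' N) := by
  constructor
  · rintro ⟨hsub, hpw⟩
    constructor
    · rintro _ ⟨e, he, rfl⟩
      induction e with
      | _ a b =>
        have := hsub he
        rw [SimpleGraph.mem_edgeSet] at this
        rw [Sym2.map_pair_eq, SimpleGraph.mem_edgeSet]
        exact this
    · exact pairwise_image Subtype.val_injective hpw
  · rintro ⟨hsub, hpw⟩
    constructor
    · intro e he
      induction e with
      | _ a b =>
        have := hsub ⟨_, he, rfl⟩
        rw [Sym2.map_pair_eq, SimpleGraph.mem_edgeSet] at this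
        rw [SimpleGraph.mem_edgeSet]
        exact this
    · exact pairwise_preimage Subtype.val_injective hpw (fun e he => ⟨e, he, rfl⟩)

omit [Finite V] in
lemma exists_lift_del {M : Set (Sym2 V)} (hM : IsMatchingSet G M) (hc : ¬ Covers M r) :
    ∃ N : Set (Sym2 {v : V | v ≠ r}), Sym2.map Subtype.val '' N = M ∧
      IsMatchingSet (G.induce {v : V | v ≠ r}) N := by
  have hrange : M ⊆ Set.range (Sym2.map (Subtype.val : {v : V | v ≠ r} → V)) := by
    intro e he
    induction e with
    | _ x y =>
      have hx : x ≠ r := fun h => hc ⟨_, he, by rw [h]; exact Sym2.mem_mk_left r y⟩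
      have hy : y ≠ r := fun h => hc ⟨_, he, by rw [h]; exact Sym2.mem_mk_right x r⟩
      exact ⟨s((⟨x, hx⟩ : {v : V | v ≠ r}), ⟨y, hy⟩), by rw [Sym2.map_pair_eq]⟩
  refine ⟨Sym2.map Subtype.val ⁻¹' M, Set.image_preimage_eq_of_subset hrange, ?_⟩
  rw [isMatchingSet_del_iff, Set.image_preimage_eq_of_subset hrange]
  exact hM

lemma matchNum_del (h : TypeA G r) : matchNum (G.induce {v : V | v ≠ r}) = matchNum G := by
  have hinj : Function.Injective (Sym2.map (Subtype.val : {v : V | v ≠ r} → V)) :=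
    Sym2.map.injective Subtype.val_injective
  apply le_antisymm
  · apply matchNum_le
    intro N hN
    have := ncard_le_matchNum G ((isMatchingSet_del_iff G r N).1 hN)
    rwa [Set.ncard_image_of_injective _ hinj] at this
  · obtain ⟨M, ⟨hM, hcard⟩, hcov⟩ := h
    obtain ⟨N, hNM, hN⟩ := exists_lift_del G r hM hcov
    have := ncard_le_matchNum _ hN
    rwa [← Set.ncard_image_of_injective N hinj, hNM, hcard] at this

lemma mm_del (h : TypeA G r) :
    mm (G.induce {v : V | v ≠ r}) = {M | M ∈ MaximumMatchings G ∧ ¬ Covers M r}.ncard := by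
  have hinj : Function.Injective (Sym2.map (Subtype.val : {v : V | v ≠ r} → V)) :=
    Sym2.map.injective Subtype.val_injective
  have himg : (Set.image (Sym2.map (Subtype.val : {v : V | v ≠ r} → V))) ''
      (MaximumMatchings (G.induce {v : V | v ≠ r}))
      = {M | M ∈ MaximumMatchings G ∧ ¬ Covers M r} := by
    ext M
    constructor
    · rintro ⟨N, ⟨hN, hNc⟩, rfl⟩
      refine ⟨⟨(isMatchingSet_del_iff G r N).1 hN, ?_⟩, ?_⟩
      · rw [Set.ncard_image_of_injective _ hinj, hNc, matchNum_del G r h]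
      · apply covers_image
        rintro ⟨⟨v, hv⟩, hvr⟩
        exact hv hvr
    · rintro ⟨⟨hM, hcard⟩, hcov⟩
      obtain ⟨N, hNM, hN⟩ := exists_lift_del G r hM hcov
      refine ⟨N, ⟨hN, ?_⟩, hNM⟩
      rw [← Set.ncard_image_of_injective N hinj, hNM, hcard, matchNum_del G r h]
  rw [mm, ← himg, Set.ncard_image_of_injective _ (Set.image_injective.2 hinj)]

end del

section gadget
variable (T : RGraph)

def iE (N : Set (Sym2 T.V)) : Set (Sym2 (T.V ⊕ Fin 7)) := Sym2.map Sum.inl '' N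

def e01 : Sym2 (T.V ⊕ Fin 7) := s(Sum.inr 0, Sum.inr 1)
def e12 : Sym2 (T.V ⊕ Fin 7) := s(Sum.inr 1, Sum.inr 2)
def e13 : Sym2 (T.V ⊕ Fin 7) := s(Sum.inr 1, Sum.inr 3)
def e34 : Sym2 (T.V ⊕ Fin 7) := s(Sum.inr 3, Sum.inr 4)
def e45 : Sym2 (T.V ⊕ Fin 7) := s(Sum.inr 4, Sum.inr 5)
def e46 : Sym2 (T.V ⊕ Fin 7) := s(Sum.inr 4, Sum.inr 6)
def e1r : Sym2 (T.V ⊕ Fin 7) := s(Sum.inr 1, Sum.inl T.root)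

def Spec : Set (Sym2 (T.V ⊕ Fin 7)) := {e01 T, e12 T, e13 T, e34 T, e45 T, e46 T, e1r T}

lemma consC_edgeSet (e : Sym2 (T.V ⊕ Fin 7)) :
    e ∈ (consC T).G.edgeSet ↔
      (∃ x y, T.G.Adj x y ∧ e = s(Sum.inl x, Sum.inl y)) ∨ e ∈ Spec T := by
  induction e with
  | _ a b =>
    rw [SimpleGraph.mem_edgeSet]
    show (SimpleGraph.fromRel _).Adj a b ↔ _
    rw [SimpleGraph.fromRel_adj]
    constructor
    · rintro ⟨hab, h | h⟩
      · rcases h with ⟨x, y, hxy, rfl, rfl⟩ | h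
        · exact Or.inl ⟨x, y, hxy, rfl⟩
        · refine Or.inr ?_
          simp only [Spec, Set.mem_insert_iff, Set.mem_singleton_iff, e01, e12, e13, e34, e45,
            e46, e1r]
          rcases h with ⟨rfl, rfl⟩ | ⟨rfl, rfl⟩ | ⟨rfl, rfl⟩ | ⟨rfl, rfl⟩ | ⟨rfl, rfl⟩ |
            ⟨rfl, rfl⟩ | ⟨rfl, rfl⟩ <;> tauto
      · rcases h with ⟨x, y, hxy, rfl, rfl⟩ | h
        · exact Or.inl ⟨y, x, hxy.symm, rfl⟩
        · refine Or.inr ?_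
          simp only [Spec, Set.mem_insert_iff, Set.mem_singleton_iff, e01, e12, e13, e34, e45,
            e46, e1r]
          rcases h with ⟨rfl, rfl⟩ | ⟨rfl, rfl⟩ | ⟨rfl, rfl⟩ | ⟨rfl, rfl⟩ | ⟨rfl, rfl⟩ |
            ⟨rfl, rfl⟩ | ⟨rfl, rfl⟩ <;> simp [Sym2.eq_swap]
    · rintro (⟨x, y, hxy, he⟩ | h)
      · rw [Sym2.eq_iff] at he
        rcases he with ⟨rfl, rfl⟩ | ⟨rfl, rfl⟩
        · exact ⟨by simp [hxy.ne], Or.inl (Or.inl ⟨x, y, hxy, rfl, rfl⟩)⟩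
        · exact ⟨by simp [hxy.ne'], Or.inr (Or.inl ⟨x, y, hxy, rfl, rfl⟩)⟩
      · simp only [Spec, Set.mem_insert_iff, Set.mem_singleton_iff, e01, e12, e13, e34, e45,
          e46, e1r, Sym2.eq_iff] at h
        rcases h with (⟨rfl, rfl⟩ | ⟨rfl, rfl⟩) | (⟨rfl, rfl⟩ | ⟨rfl, rfl⟩) |
          (⟨rfl, rfl⟩ | ⟨rfl, rfl⟩) | (⟨rfl, rfl⟩ | ⟨rfl, rfl⟩) | (⟨rfl, rfl⟩ | ⟨rfl, rfl⟩) |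
          (⟨rfl, rfl⟩ | ⟨rfl, rfl⟩) | (⟨rfl, rfl⟩ | ⟨rfl, rfl⟩) <;>
          exact ⟨by simp, by simp⟩


lemma spec_edge : Spec T ⊆ (consC T).G.edgeSet := fun e he => (consC_edgeSet T e).2 (Or.inr he)

lemma dis_of_ne {a b c d : T.V ⊕ Fin 7} (h1 : a ≠ c) (h2 : a ≠ d) (h3 : b ≠ c) (h4 : b ≠ d) :
    ∀ v, ¬(v ∈ s(a, b) ∧ v ∈ s(c, d)) := by
  rintro v ⟨hv1, hv2⟩
  rw [Sym2.mem_iff] at hv1 hv2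
  rcases hv1 with rfl | rfl <;> rcases hv2 with h | h <;> simp_all

lemma iE_inr_not_mem {N : Set (Sym2 T.V)} {e : Sym2 (T.V ⊕ Fin 7)} (he : e ∈ iE T N)
    (i : Fin 7) : Sum.inr i ∉ e := by
  obtain ⟨n, _, rfl⟩ := he
  rw [Sym2.mem_map]
  rintro ⟨a, _, h⟩
  exact Sum.inl_ne_inr h

lemma iE_root_not_mem {N : Set (Sym2 T.V)} (hc : ¬ Covers N T.root) {e : Sym2 (T.V ⊕ Fin 7)}
    (he : e ∈ iE T N) : Sum.inl T.root ∉ e := by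
  obtain ⟨n, hn, rfl⟩ := he
  rw [Sym2.mem_map]
  rintro ⟨a, ha, h⟩
  rw [Sum.inl.injEq] at h
  subst h
  exact hc ⟨n, hn, ha⟩

lemma dis_iE_spec {N : Set (Sym2 T.V)} {e f : Sym2 (T.V ⊕ Fin 7)} (he : e ∈ iE T N)
    (hf : f ∈ Spec T) (hf' : f = e1r T → ¬ Covers N T.root) :
    ∀ v, ¬(v ∈ e ∧ v ∈ f) := by
  rintro v ⟨hv1, hv2⟩
  simp only [Spec, Set.mem_insert_iff, Set.mem_singleton_iff] at hf
  rcases hf with rfl | rfl | rfl | rfl | rfl | rfl | rfl <;>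
    simp only [e01, e12, e13, e34, e45, e46, e1r, Sym2.mem_iff] at hv2
  case _ => rcases hv2 with rfl | rfl <;> exact iE_inr_not_mem T he _ hv1
  case _ => rcases hv2 with rfl | rfl <;> exact iE_inr_not_mem T he _ hv1
  case _ => rcases hv2 with rfl | rfl <;> exact iE_inr_not_mem T he _ hv1
  case _ => rcases hv2 with rfl | rfl <;> exact iE_inr_not_mem T he _ hv1
  case _ => rcases hv2 with rfl | rfl <;> exact iE_inr_not_mem T he _ hv1
  case _ => rcases hv2 with rfl | rfl <;> exact iE_inr_not_mem T he _ hv1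
  case _ =>
    rcases hv2 with rfl | rfl
    · exact iE_inr_not_mem T he _ hv1
    · exact iE_root_not_mem T (hf' rfl) he hv1

lemma iE_not_spec {N : Set (Sym2 T.V)} {e : Sym2 (T.V ⊕ Fin 7)} (he : e ∈ iE T N) :
    e ∉ Spec T := by
  intro hs
  simp only [Spec, Set.mem_insert_iff, Set.mem_singleton_iff] at hs
  rcases hs with rfl | rfl | rfl | rfl | rfl | rfl | rfl
  · exact iE_inr_not_mem T he 0 (by simp [e01])
  · exact iE_inr_not_mem T he 1 (by simp [e12])
  · exact iE_inr_not_mem T he 1 (by simp [e13])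
  · exact iE_inr_not_mem T he 3 (by simp [e34])
  · exact iE_inr_not_mem T he 4 (by simp [e45])
  · exact iE_inr_not_mem T he 4 (by simp [e46])
  · exact iE_inr_not_mem T he 1 (by simp [e1r])

lemma iE_ncard (N : Set (Sym2 T.V)) : (iE T N).ncard = N.ncard :=
  Set.ncard_image_of_injective N (Sym2.map.injective Sum.inl_injective)

lemma iE_sub_edgeSet {N : Set (Sym2 T.V)} (hN : N ⊆ T.G.edgeSet) :
    iE T N ⊆ (consC T).G.edgeSet := by
  rintro _ ⟨n, hn, rfl⟩
  induction n with
  | _ x y =>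
    rw [consC_edgeSet]
    exact Or.inl ⟨x, y, hN hn, by rw [Sym2.map_pair_eq]⟩

def NN : Set (Set (Sym2 T.V)) := {N | N ∈ MaximumMatchings T.G ∧ ¬ Covers N T.root}

def DomB : Set (Sym2 (T.V ⊕ Fin 7) × Sym2 (T.V ⊕ Fin 7)) :=
  ({e01 T, e12 T} ×ˢ {e34 T, e45 T, e46 T}) ∪ ({e13 T} ×ˢ {e45 T, e46 T})

def DomR : Set (Sym2 (T.V ⊕ Fin 7) × Sym2 (T.V ⊕ Fin 7)) :=
  {e1r T} ×ˢ {e34 T, e45 T, e46 T}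

def Dom : Set ((Sym2 (T.V ⊕ Fin 7) × Sym2 (T.V ⊕ Fin 7)) × Set (Sym2 T.V)) :=
  DomB T ×ˢ MaximumMatchings T.G ∪ DomR T ×ˢ NN T

def Θ (p : (Sym2 (T.V ⊕ Fin 7) × Sym2 (T.V ⊕ Fin 7)) × Set (Sym2 T.V)) :
    Set (Sym2 (T.V ⊕ Fin 7)) := iE T p.2 ∪ {p.1.1, p.1.2}

lemma dom_facts {p} (hp : p ∈ Dom T) :
    p.1.1 ∈ Spec T ∧ p.1.2 ∈ Spec T ∧ p.1.1 ≠ p.1.2 ∧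
    (∀ v, ¬(v ∈ p.1.1 ∧ v ∈ p.1.2)) ∧ p.2 ∈ MaximumMatchings T.G ∧
    (p.1.1 = e1r T → ¬ Covers p.2 T.root) ∧ p.1.2 ≠ e1r T := by
  obtain ⟨⟨eb, e4⟩, N⟩ := p
  rcases hp with ⟨hb4, hN⟩ | ⟨hb4, hN, hNc⟩
  · simp only [DomB, Set.mem_union, Set.mem_prod, Set.mem_insert_iff,
      Set.mem_singleton_iff] at hb4
    rcases hb4 with ⟨rfl | rfl, rfl | rfl | rfl⟩ | ⟨rfl, rfl | rfl⟩ <;>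
      exact ⟨by simp [Spec], by simp [Spec],
        by simp [e01, e12, e13, e34, e45, e46, Sym2.eq_iff],
        dis_of_ne T (by simp) (by simp) (by simp) (by simp), hN,
        fun h => absurd h (by simp [e01, e12, e13, e1r, Sym2.eq_iff]),
        by simp [e34, e45, e46, e1r, Sym2.eq_iff]⟩
  · simp only [DomR, Set.mem_prod, Set.mem_insert_iff, Set.mem_singleton_iff] at hb4
    rcases hb4 with ⟨rfl, rfl | rfl | rfl⟩ <;>
      exact ⟨by simp [Spec], by simp [Spec],
        by simp [e1r, e34, e45, e46, Sym2.eq_iff],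
        dis_of_ne T (by simp) (by simp) (by simp) (by simp), hN,
        fun _ => hNc, by simp [e34, e45, e46, e1r, Sym2.eq_iff]⟩


lemma theta_isMatchingSet {p} (hp : p ∈ Dom T) : IsMatchingSet (consC T).G (Θ T p) := by
  obtain ⟨hsb, hs4, hne, hdis, hN, hroot, hne4⟩ := dom_facts T hp
  constructor
  · intro e he
    rcases he with he | he
    · exact iE_sub_edgeSet T hN.1.1 he
    · rcases he with rfl | rfl
      · exact spec_edge T hsb
      · exact spec_edge T hs4
  · have hpwA := pairwise_image (ι := (Sum.inl : T.V → T.V ⊕ Fin 7)) Sum.inl_injective hN.1.2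
    intro e he f hf hef
    rcases he with he | (rfl | rfl) <;> rcases hf with hf | (rfl | rfl)
    · exact hpwA he hf hef
    · exact dis_iE_spec T he hsb hroot
    · exact dis_iE_spec T he hs4 (fun h => absurd h hne4)
    · exact fun v hv => dis_iE_spec T hf hsb hroot v ⟨hv.2, hv.1⟩
    · exact absurd rfl hef
    · exact hdis
    · exact fun v hv => dis_iE_spec T hf hs4 (fun h => absurd h hne4) v ⟨hv.2, hv.1⟩
    · exact fun v hv => hdis v ⟨hv.2, hv.1⟩
    · exact absurd rfl hef

lemma theta_ncard [Finite T.V] {p} (hp : p ∈ Dom T) : (Θ T p).ncard = p.2.ncard + 2 := by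
  obtain ⟨hsb, hs4, hne, hdis, hN, hroot, hne4⟩ := dom_facts T hp
  have hdisj : Disjoint (iE T p.2) {p.1.1, p.1.2} := by
    rw [Set.disjoint_left]
    rintro e he (rfl | rfl)
    · exact iE_not_spec T he hsb
    · exact iE_not_spec T he hs4
  rw [Θ, Set.ncard_union_eq hdisj (Set.toFinite _) (Set.toFinite _), iE_ncard,
    Set.ncard_pair hne]

lemma ncard_prod {α β : Type*} (s : Set α) (t : Set β) :
    (s ×ˢ t).ncard = s.ncard * t.ncard := by
  have := Nat.card_congr (Equiv.Set.prod s t)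
  rw [Nat.card_prod] at this
  simpa [Nat.card_coe_set_eq] using this

lemma ncard_le_one_of_subsingleton {α : Type*} {s : Set α} (h : Set.Subsingleton s) :
    s.ncard ≤ 1 := by
  rcases h.eq_empty_or_singleton with rfl | ⟨a, rfl⟩ <;> simp

def SpecB : Set (Sym2 (T.V ⊕ Fin 7)) := {e01 T, e12 T, e13 T, e1r T}
def Spec4 : Set (Sym2 (T.V ⊕ Fin 7)) := {e34 T, e45 T, e46 T}

lemma spec_eq_union : Spec T = SpecB T ∪ Spec4 T := by
  simp only [Spec, SpecB, Spec4, Set.insert_union, Set.union_insert, Set.union_singleton]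
  ext e
  simp only [Set.mem_insert_iff, Set.mem_singleton_iff]
  tauto

lemma specB_mem_b {e : Sym2 (T.V ⊕ Fin 7)} (he : e ∈ SpecB T) : Sum.inr 1 ∈ e := by
  rcases he with rfl | rfl | rfl | rfl <;> simp [e01, e12, e13, e1r]

lemma spec4_mem_4 {e : Sym2 (T.V ⊕ Fin 7)} (he : e ∈ Spec4 T) : Sum.inr 4 ∈ e := by
  rcases he with rfl | rfl | rfl <;> simp [e34, e45, e46]

lemma classB_ne_class4 {e f : Sym2 (T.V ⊕ Fin 7)} (he : e ∈ SpecB T) (hf : f ∈ Spec4 T) :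
    e ≠ f := by
  rcases he with rfl | rfl | rfl | rfl <;> rcases hf with rfl | rfl | rfl <;>
    simp [e01, e12, e13, e1r, e34, e45, e46, Sym2.eq_iff]

lemma matching_decomp {M : Set (Sym2 (T.V ⊕ Fin 7))} (hM : IsMatchingSet (consC T).G M) :
    ∃ N : Set (Sym2 T.V), IsMatchingSet T.G N ∧ M \ Spec T = iE T N ∧
      (∀ e ∈ M, Sum.inl T.root ∈ e → e ∈ iE T N → e1r T ∉ M) ∧
      (e1r T ∈ M → ¬ Covers N T.root) := by
  have hrange : M \ Spec T ⊆ Set.range (Sym2.map (Sum.inl : T.V → T.V ⊕ Fin 7)) := by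
    rintro e ⟨heM, heS⟩
    rcases (consC_edgeSet T e).1 (hM.1 heM) with ⟨x, y, hxy, rfl⟩ | h
    · exact ⟨s(x, y), by rw [Sym2.map_pair_eq]⟩
    · exact absurd h heS
  have himg : Sym2.map Sum.inl '' (Sym2.map Sum.inl ⁻¹' (M \ Spec T)) = M \ Spec T :=
    Set.image_preimage_eq_of_subset hrange
  refine ⟨Sym2.map Sum.inl ⁻¹' (M \ Spec T), ⟨?_, ?_⟩, himg.symm, ?_, ?_⟩
  · intro n hn
    induction n with
    | _ x y =>
      have : Sym2.map Sum.inl s(x, y) ∈ M \ Spec T := hn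
      have he := (consC_edgeSet T _).1 (hM.1 this.1)
      rw [Sym2.map_pair_eq] at he
      rcases he with ⟨x', y', hxy, hexy⟩ | h
      · rw [SimpleGraph.mem_edgeSet]
        rw [Sym2.eq_iff] at hexy
        rcases hexy with ⟨hx, hy⟩ | ⟨hx, hy⟩ <;>
          rw [Sum.inl.injEq] at hx hy <;> subst hx <;> subst hy
        · exact hxy
        · exact hxy.symm
      · rw [Sym2.map_pair_eq] at this
        exact absurd h this.2
  · exact pairwise_preimage (ι := (Sum.inl : T.V → T.V ⊕ Fin 7)) Sum.inl_injective hM.2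
      (fun e he => (Set.diff_subset) he)
  · intro e heM hre heiE h1r
    have h1 : e ≠ e1r T := by
      rintro rfl
      exact iE_not_spec T heiE (by simp [Spec])
    exact hM.2 heM h1r h1 (Sum.inl T.root) ⟨hre, by simp [e1r]⟩
  · rintro h1r ⟨n, hn, hroot⟩
    have hmem : Sym2.map Sum.inl n ∈ M \ Spec T := hn
    have h1 : Sym2.map Sum.inl n ≠ e1r T := by
      intro h
      exact iE_not_spec T ⟨n, hn, rfl⟩ (h ▸ (by simp [Spec] : e1r T ∈ Spec T))
    exact hM.2 hmem.1 h1r h1 (Sum.inl T.root)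
      ⟨Sym2.mem_map.2 ⟨T.root, hroot, rfl⟩, by simp [e1r]⟩


lemma dom_facts2 {p} (hp : p ∈ Dom T) : p.1.1 ∈ SpecB T ∧ p.1.2 ∈ Spec4 T := by
  obtain ⟨⟨eb, e4⟩, N⟩ := p
  rcases hp with ⟨hb4, _⟩ | ⟨hb4, _⟩
  · simp only [DomB, Set.mem_union, Set.mem_prod, Set.mem_insert_iff,
      Set.mem_singleton_iff] at hb4
    rcases hb4 with ⟨rfl | rfl, rfl | rfl | rfl⟩ | ⟨rfl, rfl | rfl⟩ <;>
      exact ⟨by simp [SpecB], by simp [Spec4]⟩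
  · simp only [DomR, Set.mem_prod, Set.mem_insert_iff, Set.mem_singleton_iff] at hb4
    rcases hb4 with ⟨rfl, rfl | rfl | rfl⟩ <;> exact ⟨by simp [SpecB], by simp [Spec4]⟩

lemma subsingleton_interB {M : Set (Sym2 (T.V ⊕ Fin 7))}
    (hM : IsMatchingSet (consC T).G M) : (M ∩ SpecB T).Subsingleton := by
  intro e he f hf
  by_contra hef
  exact hM.2 he.1 hf.1 hef (Sum.inr 1) ⟨specB_mem_b T he.2, specB_mem_b T hf.2⟩

lemma subsingleton_inter4 {M : Set (Sym2 (T.V ⊕ Fin 7))}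
    (hM : IsMatchingSet (consC T).G M) : (M ∩ Spec4 T).Subsingleton := by
  intro e he f hf
  by_contra hef
  exact hM.2 he.1 hf.1 hef (Sum.inr 4) ⟨spec4_mem_4 T he.2, spec4_mem_4 T hf.2⟩

lemma inter_spec_split (M : Set (Sym2 (T.V ⊕ Fin 7))) :
    M ∩ Spec T = (M ∩ SpecB T) ∪ (M ∩ Spec4 T) := by
  rw [spec_eq_union, Set.inter_union_distrib_left]

lemma ncard_split [Finite T.V] (M : Set (Sym2 (T.V ⊕ Fin 7))) :
    M.ncard = (M \ Spec T).ncard + (M ∩ Spec T).ncard := by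
  rw [← Set.ncard_union_eq
    (Set.disjoint_of_subset_right Set.inter_subset_right Set.disjoint_sdiff_left)
    (Set.toFinite _) (Set.toFinite _), Set.diff_union_inter]

instance consC_finite [Finite T.V] : Finite (consC T).V :=
  inferInstanceAs (Finite (T.V ⊕ Fin 7))

lemma matchNum_consC [Finite T.V] (hA : TypeA T.G T.root) :
    matchNum (consC T).G = matchNum T.G + 2 := by
  apply le_antisymm
  · apply matchNum_le
    intro M hM
    obtain ⟨N, hN, himg, _, _⟩ := matching_decomp T hM
    have h1 : (M \ Spec T).ncard = N.ncard := by rw [himg, iE_ncard]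
    have h2 : (M ∩ Spec T).ncard ≤ 2 := by
      rw [inter_spec_split]
      calc ((M ∩ SpecB T) ∪ (M ∩ Spec4 T)).ncard
          ≤ (M ∩ SpecB T).ncard + (M ∩ Spec4 T).ncard := Set.ncard_union_le _ _
        _ ≤ 1 + 1 := add_le_add (ncard_le_one_of_subsingleton (subsingleton_interB T hM))
            (ncard_le_one_of_subsingleton (subsingleton_inter4 T hM))
    have h3 := ncard_le_matchNum T.G hN
    rw [ncard_split T M, h1]
    omega
  · obtain ⟨N, hN⟩ := exists_max_matching T.G
    have hp : ((e01 T, e34 T), N) ∈ Dom T := Or.inl ⟨Or.inl ⟨Or.inl rfl, Or.inl rfl⟩, hN⟩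
    have := ncard_le_matchNum (consC T).G (theta_isMatchingSet T hp)
    rwa [theta_ncard T hp, hN.2] at this

lemma mmax_consC [Finite T.V] (hA : TypeA T.G T.root) :
    MaximumMatchings (consC T).G = Θ T '' Dom T := by
  ext M
  constructor
  · rintro ⟨hM, hcard⟩
    obtain ⟨N, hN, himg, _, hroot⟩ := matching_decomp T hM
    have hs1 := ncard_le_one_of_subsingleton (subsingleton_interB T hM)
    have hs4 := ncard_le_one_of_subsingleton (subsingleton_inter4 T hM)
    have hle := Set.ncard_union_le (M ∩ SpecB T) (M ∩ Spec4 T)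
    have hNle := ncard_le_matchNum T.G hN
    have hsplit := ncard_split T M
    rw [himg, iE_ncard, inter_spec_split] at hsplit
    rw [matchNum_consC T hA] at hcard
    have hb1 : (M ∩ SpecB T).ncard = 1 := by omega
    have hb4 : (M ∩ Spec4 T).ncard = 1 := by omega
    have hNcard : N.ncard = matchNum T.G := by
      have := Set.ncard_union_le (M ∩ SpecB T) (M ∩ Spec4 T)
      omega
    obtain ⟨eb, heb⟩ := Set.ncard_eq_one.1 hb1
    obtain ⟨e4, he4⟩ := Set.ncard_eq_one.1 hb4
    have hebM : eb ∈ M ∧ eb ∈ SpecB T := by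
      have : eb ∈ M ∩ SpecB T := heb ▸ rfl
      exact ⟨this.1, this.2⟩
    have he4M : e4 ∈ M ∧ e4 ∈ Spec4 T := by
      have : e4 ∈ M ∩ Spec4 T := he4 ▸ rfl
      exact ⟨this.1, this.2⟩
    have hMeq : M = Θ T ((eb, e4), N) := by
      have : M = (M \ Spec T) ∪ (M ∩ Spec T) := (Set.diff_union_inter M (Spec T)).symm
      rw [this, himg, inter_spec_split, heb, he4]
      rfl
    have hNmax : N ∈ MaximumMatchings T.G := ⟨hN, hNcard⟩
    refine ⟨((eb, e4), N), ?_, hMeq.symm⟩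
    rcases hebM.2 with hb | hb | hb | hb
    · exact Or.inl ⟨Or.inl ⟨Or.inl hb, he4M.2⟩, hNmax⟩
    · exact Or.inl ⟨Or.inl ⟨Or.inr hb, he4M.2⟩, hNmax⟩
    · -- eb = e13 : rule out e4 = e34
      subst hb
      have he434 : e4 ≠ e34 T := by
        rintro rfl
        exact hM.2 hebM.1 he4M.1 (classB_ne_class4 T (by simp [SpecB]) (by simp [Spec4]))
          (Sum.inr 3) ⟨by simp [e13], by simp [e34]⟩
      rcases he4M.2 with h4 | h4 | h4
      · exact absurd h4 he434
      · exact Or.inl ⟨Or.inr ⟨rfl, Or.inl h4⟩, hNmax⟩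
      · exact Or.inl ⟨Or.inr ⟨rfl, Or.inr h4⟩, hNmax⟩
    · subst hb
      exact Or.inr ⟨⟨rfl, he4M.2⟩, hNmax, hroot hebM.1⟩
  · rintro ⟨p, hp, rfl⟩
    refine ⟨theta_isMatchingSet T hp, ?_⟩
    rw [theta_ncard T hp, (dom_facts T hp).2.2.2.2.1.2, matchNum_consC T hA]

lemma theta_diff_spec {p} (hp : p ∈ Dom T) : Θ T p \ Spec T = iE T p.2 := by
  obtain ⟨hsb, hs4, _, _, _, _, _⟩ := dom_facts T hp
  ext e
  constructor
  · rintro ⟨he | (rfl | rfl), hns⟩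
    · exact he
    · exact absurd hsb hns
    · exact absurd hs4 hns
  · exact fun he => ⟨Or.inl he, iE_not_spec T he⟩

lemma theta_inter_spec {p} (hp : p ∈ Dom T) : Θ T p ∩ Spec T = {p.1.1, p.1.2} := by
  obtain ⟨hsb, hs4, _, _, _, _, _⟩ := dom_facts T hp
  ext e
  constructor
  · rintro ⟨he | he, hs⟩
    · exact absurd hs (iE_not_spec T he)
    · exact he
  · rintro (rfl | rfl)
    · exact ⟨Or.inr (Or.inl rfl), hsb⟩
    · exact ⟨Or.inr (Or.inr rfl), hs4⟩

lemma theta_injOn : Set.InjOn (Θ T) (Dom T) := by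
  intro p hp q hq heq
  obtain ⟨hpb, hp4⟩ := dom_facts2 T hp
  obtain ⟨hqb, hq4⟩ := dom_facts2 T hq
  have h2 : iE T p.2 = iE T q.2 := by
    rw [← theta_diff_spec T hp, ← theta_diff_spec T hq, heq]
  have hN : p.2 = q.2 :=
    Set.image_injective.2 (Sym2.map.injective Sum.inl_injective) h2
  have h1 : ({p.1.1, p.1.2} : Set (Sym2 (T.V ⊕ Fin 7))) = {q.1.1, q.1.2} := by
    rw [← theta_inter_spec T hp, ← theta_inter_spec T hq, heq]
  have hb : p.1.1 = q.1.1 := by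
    have : p.1.1 ∈ ({q.1.1, q.1.2} : Set (Sym2 (T.V ⊕ Fin 7))) := h1 ▸ Or.inl rfl
    rcases this with h | h
    · exact h
    · exact absurd h (classB_ne_class4 T hpb hq4)
  have h4 : p.1.2 = q.1.2 := by
    have : p.1.2 ∈ ({q.1.1, q.1.2} : Set (Sym2 (T.V ⊕ Fin 7))) := h1 ▸ Or.inr rfl
    rcases this with h | h
    · exact absurd h.symm (classB_ne_class4 T hqb hp4)
    · exact h
  obtain ⟨⟨pb, p4⟩, pN⟩ := p
  obtain ⟨⟨qb, q4⟩, qN⟩ := q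
  simp_all


lemma theta_covers_s {p} (hp : p ∈ Dom T) : Covers (Θ T p) (Sum.inr 0) ↔ p.1.1 = e01 T := by
  obtain ⟨hpb, hp4⟩ := dom_facts2 T hp
  constructor
  · rintro ⟨e, he | (rfl | rfl), h0⟩
    · exact absurd h0 (iE_inr_not_mem T he 0)
    · rcases hpb with h | h | h | h
      · exact h
      · rw [h] at h0; simp [e12, Sym2.mem_iff] at h0
      · rw [h] at h0; simp [e13, Sym2.mem_iff] at h0
      · rw [h] at h0; simp [e1r, Sym2.mem_iff] at h0
    · rcases hp4 with h | h | h <;> rw [h] at h0 <;>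
        simp [e34, e45, e46, Sym2.mem_iff] at h0
  · intro h
    exact ⟨p.1.1, Or.inr (Or.inl rfl), by rw [h]; simp [e01]⟩

def DomB' : Set (Sym2 (T.V ⊕ Fin 7) × Sym2 (T.V ⊕ Fin 7)) :=
  ({e12 T} ×ˢ {e34 T, e45 T, e46 T}) ∪ ({e13 T} ×ˢ {e45 T, e46 T})

def Dom' : Set ((Sym2 (T.V ⊕ Fin 7) × Sym2 (T.V ⊕ Fin 7)) × Set (Sym2 T.V)) :=
  DomB' T ×ˢ MaximumMatchings T.G ∪ DomR T ×ˢ NN T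

lemma dom'_sub : Dom' T ⊆ Dom T := by
  rintro p (⟨hb4, hN⟩ | h)
  · refine Or.inl ⟨?_, hN⟩
    simp only [DomB', Set.mem_union, Set.mem_prod, Set.mem_insert_iff,
      Set.mem_singleton_iff] at hb4
    simp only [DomB, Set.mem_union, Set.mem_prod, Set.mem_insert_iff, Set.mem_singleton_iff]
    tauto
  · exact Or.inr h

lemma dom'_iff {p} (hp : p ∈ Dom T) : p ∈ Dom' T ↔ p.1.1 ≠ e01 T := by
  constructor
  · rintro (⟨hb4, _⟩ | ⟨hb4, _⟩)
    · simp only [DomB', Set.mem_union, Set.mem_prod, Set.mem_insert_iff,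
        Set.mem_singleton_iff] at hb4
      rcases hb4 with ⟨h, _⟩ | ⟨h, _⟩ <;> rw [h] <;>
        simp [e01, e12, e13, Sym2.eq_iff]
    · simp only [DomR, Set.mem_prod, Set.mem_insert_iff, Set.mem_singleton_iff] at hb4
      rw [hb4.1]
      simp [e01, e1r, Sym2.eq_iff]
  · intro hne
    rcases hp with ⟨hb4, hN⟩ | h
    · refine Or.inl ⟨?_, hN⟩
      simp only [DomB, Set.mem_union, Set.mem_prod, Set.mem_insert_iff,
        Set.mem_singleton_iff] at hb4
      simp only [DomB', Set.mem_union, Set.mem_prod, Set.mem_insert_iff,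
        Set.mem_singleton_iff]
      rcases hb4 with ⟨h1 | h1, h4⟩ | ⟨h1, h4⟩
      · exact absurd h1 hne
      · exact Or.inl ⟨h1, h4⟩
      · exact Or.inr ⟨h1, h4⟩
    · exact Or.inr h

lemma ncard_e34s [Finite T.V] : ({e34 T, e45 T, e46 T} : Set (Sym2 (T.V ⊕ Fin 7))).ncard = 3 := by
  rw [Set.ncard_insert_of_notMem (by simp [e34, e45, e46, Sym2.eq_iff]) (Set.toFinite _),
    Set.ncard_pair (by simp [e45, e46, Sym2.eq_iff])]

lemma ncard_e45s [Finite T.V] : ({e45 T, e46 T} : Set (Sym2 (T.V ⊕ Fin 7))).ncard = 2 :=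
  Set.ncard_pair (by simp [e45, e46, Sym2.eq_iff])

lemma ncard_domB [Finite T.V] : (DomB T).ncard = 8 := by
  rw [DomB, Set.ncard_union_eq ?hd (Set.toFinite _) (Set.toFinite _), ncard_prod, ncard_prod,
    Set.ncard_pair (by simp [e01, e12, Sym2.eq_iff]), ncard_e34s, Set.ncard_singleton,
    ncard_e45s]
  case hd =>
    rw [Set.disjoint_left]
    rintro ⟨a, b⟩ ⟨ha, _⟩ ⟨ha', _⟩
    simp only [Set.mem_insert_iff, Set.mem_singleton_iff] at ha ha'
    subst ha'
    rcases ha with h | h <;> revert h <;> simp [e01, e12, e13, Sym2.eq_iff]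

lemma ncard_domB' [Finite T.V] : (DomB' T).ncard = 5 := by
  rw [DomB', Set.ncard_union_eq ?hd (Set.toFinite _) (Set.toFinite _), ncard_prod, ncard_prod,
    Set.ncard_singleton, ncard_e34s, Set.ncard_singleton, ncard_e45s]
  case hd =>
    rw [Set.disjoint_left]
    rintro ⟨a, b⟩ ⟨ha, _⟩ ⟨ha', _⟩
    simp only [Set.mem_singleton_iff] at ha ha'
    subst ha'
    revert ha
    simp [e12, e13, Sym2.eq_iff]

lemma ncard_domR [Finite T.V] : (DomR T).ncard = 3 := by
  rw [DomR, ncard_prod, Set.ncard_singleton, ncard_e34s, one_mul]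

lemma domBR_disjoint {S1 S2 : Set (Set (Sym2 T.V))} :
    Disjoint (DomB T ×ˢ S1) (DomR T ×ˢ S2) := by
  rw [Set.disjoint_left]
  rintro ⟨⟨a, b⟩, N⟩ ⟨ha, _⟩ ⟨ha', _⟩
  simp only [DomB, DomR, Set.mem_union, Set.mem_prod, Set.mem_insert_iff,
    Set.mem_singleton_iff] at ha ha'
  obtain ⟨rfl, -⟩ := ha'
  rcases ha with ⟨h | h, -⟩ | ⟨h, -⟩ <;> revert h <;> simp [e01, e12, e13, e1r, Sym2.eq_iff]

lemma domB'R_disjoint {S1 S2 : Set (Set (Sym2 T.V))} :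
    Disjoint (DomB' T ×ˢ S1) (DomR T ×ˢ S2) := by
  rw [Set.disjoint_left]
  rintro ⟨⟨a, b⟩, N⟩ ⟨ha, _⟩ ⟨ha', _⟩
  simp only [DomB', DomR, Set.mem_union, Set.mem_prod, Set.mem_insert_iff,
    Set.mem_singleton_iff] at ha ha'
  obtain ⟨rfl, -⟩ := ha'
  rcases ha with ⟨h, -⟩ | ⟨h, -⟩ <;> revert h <;> simp [e12, e13, e1r, Sym2.eq_iff]

theorem consC_key (T : RGraph) [Finite T.V] (hA : TypeA T.G T.root) :
    TypeA (consC T).G (consC T).root ∧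
    (consC T).m = 8 * T.m + 3 * T.m0 ∧
    (consC T).m0 = 5 * T.m + 3 * T.m0 := by
  have hNN : (NN T).ncard = T.m0 := by
    rw [RGraph.m0, mm_del T.G T.root hA]
    rfl
  have hroot : (consC T).root = Sum.inr 0 := rfl
  have hTypeA : TypeA (consC T).G (consC T).root := by
    obtain ⟨N, hN⟩ := exists_max_matching T.G
    have hp : ((e12 T, e34 T), N) ∈ Dom T := Or.inl ⟨Or.inl ⟨Or.inr rfl, Or.inl rfl⟩, hN⟩
    refine ⟨Θ T ((e12 T, e34 T), N), by rw [mmax_consC T hA]; exact ⟨_, hp, rfl⟩, ?_⟩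
    rw [hroot]
    rw [theta_covers_s T hp]
    simp [e12, e01, Sym2.eq_iff]
  refine ⟨hTypeA, ?_, ?_⟩
  · rw [RGraph.m, mm, mmax_consC T hA, Set.ncard_image_of_injOn (theta_injOn T), Dom,
      Set.ncard_union_eq (domBR_disjoint T) (Set.toFinite _) (Set.toFinite _),
      ncard_prod, ncard_prod, ncard_domB, ncard_domR, hNN]
    rfl
  · have h1 : (consC T).m0 = {M | M ∈ MaximumMatchings (consC T).G ∧
        ¬ Covers M (Sum.inr 0)}.ncard := by
      rw [RGraph.m0, hroot]
      exact mm_del (consC T).G (Sum.inr 0) (hroot ▸ hTypeA)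
    have h2 : {M | M ∈ MaximumMatchings (consC T).G ∧ ¬ Covers M (Sum.inr 0)}
        = Θ T '' Dom' T := by
      ext M
      constructor
      · rintro ⟨hM, hcov⟩
        rw [mmax_consC T hA] at hM
        obtain ⟨p, hp, rfl⟩ := hM
        refine ⟨p, (dom'_iff T hp).2 ?_, rfl⟩
        intro h
        exact hcov ((theta_covers_s T hp).2 h)
      · rintro ⟨p, hp, rfl⟩
        have hpD := dom'_sub T hp
        refine ⟨by rw [mmax_consC T hA]; exact ⟨p, hpD, rfl⟩, ?_⟩
        rw [theta_covers_s T hpD]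
        exact (dom'_iff T hpD).1 hp
    rw [h1, h2, Set.ncard_image_of_injOn ((theta_injOn T).mono (dom'_sub T)), Dom',
      Set.ncard_union_eq (domB'R_disjoint T) (Set.toFinite _) (Set.toFinite _),
      ncard_prod, ncard_prod, ncard_domB', ncard_domR, hNN]
    rfl

end gadget

section base

lemma mm_no_edges {V : Type} (G : SimpleGraph V) (h : ∀ a b, ¬ G.Adj a b) :
    MaximumMatchings G = {∅} ∧ matchNum G = 0 := by
  have hE : G.edgeSet = ∅ := by
    ext e
    induction e with
    | _ a b => simp [h a b]
  have hM : ∀ M : Set (Sym2 V), IsMatchingSet G M → M = ∅ := by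
    intro M hM
    have := hM.1
    rw [hE, Set.subset_empty_iff] at this
    exact this
  have hnum : matchNum G = 0 := by
    rw [matchNum]
    convert csSup_singleton 0
    · rfl
    ext n
    simp only [Set.mem_setOf_eq, Set.mem_singleton_iff]
    constructor
    · rintro ⟨M, hMm, rfl⟩
      rw [hM M hMm, Set.ncard_empty]
    · rintro rfl
      exact ⟨∅, ⟨by rw [hE], Set.pairwise_empty _⟩, Set.ncard_empty _⟩
  refine ⟨?_, hnum⟩
  ext M
  simp only [MaximumMatchings, Set.mem_setOf_eq, Set.mem_singleton_iff, hnum]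
  constructor
  · rintro ⟨hMm, _⟩
    exact hM M hMm
  · rintro rfl
    exact ⟨⟨by rw [hE], Set.pairwise_empty _⟩, Set.ncard_empty _⟩

lemma star_mm {V : Type} [Finite V] (G : SimpleGraph V) (c : V)
    (hc : ∀ e ∈ G.edgeSet, c ∈ e) (hne : G.edgeSet.Nonempty) :
    matchNum G = 1 ∧ MaximumMatchings G = (fun e => ({e} : Set (Sym2 V))) '' G.edgeSet := by
  have hsub : ∀ M : Set (Sym2 V), IsMatchingSet G M → M.Subsingleton := by
    intro M hM e he f hf
    by_contra hef
    exact hM.2 he hf hef c ⟨hc e (hM.1 he), hc f (hM.1 hf)⟩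
  obtain ⟨e0, he0⟩ := hne
  have hsingle : ∀ e ∈ G.edgeSet, IsMatchingSet G {e} :=
    fun e he => ⟨Set.singleton_subset_iff.2 he, Set.pairwise_singleton _ _⟩
  have hnum : matchNum G = 1 := by
    apply le_antisymm
    · exact matchNum_le G (fun M hM => ncard_le_one_of_subsingleton (hsub M hM))
    · have := ncard_le_matchNum G (hsingle e0 he0)
      rwa [Set.ncard_singleton] at this
  refine ⟨hnum, ?_⟩
  ext M
  simp only [MaximumMatchings, Set.mem_setOf_eq, Set.mem_image, hnum]
  constructor
  · rintro ⟨hMm, hc1⟩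
    obtain ⟨e, rfl⟩ := Set.ncard_eq_one.1 hc1
    exact ⟨e, hMm.1 rfl, rfl⟩
  · rintro ⟨e, he, rfl⟩
    exact ⟨hsingle e he, Set.ncard_singleton e⟩

instance : Finite rL.V := inferInstanceAs (Finite PUnit.{1})

lemma rL_no_adj : ∀ a b : rL.V, ¬ rL.G.Adj a b := fun a b h => h

lemma rL_typeA : TypeA rL.G rL.root := by
  refine ⟨∅, by rw [(mm_no_edges rL.G rL_no_adj).1]; rfl, ?_⟩
  rintro ⟨e, he, -⟩
  exact he

lemma rL_m : rL.m = 1 := by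
  rw [RGraph.m, mm, (mm_no_edges rL.G rL_no_adj).1, Set.ncard_singleton]

lemma rL_m0 : rL.m0 = 1 := by
  rw [RGraph.m0, mm_del rL.G rL.root rL_typeA]
  have h : {M | M ∈ MaximumMatchings rL.G ∧ ¬ Covers M rL.root} = {∅} := by
    ext M
    simp only [Set.mem_setOf_eq, (mm_no_edges rL.G rL_no_adj).1, Set.mem_singleton_iff]
    constructor
    · exact fun h => h.1
    · rintro rfl
      refine ⟨rfl, ?_⟩
      rintro ⟨e, he, -⟩
      exact he
  rw [h, Set.ncard_singleton]

def rFG : SimpleGraph (Fin 4) :=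
  SimpleGraph.fromRel (fun a b => (a = 0 ∧ b = 1) ∨ (a = 1 ∧ b = 2) ∨ (a = 1 ∧ b = 3))

lemma rFG_edgeSet : rFG.edgeSet =
    {s((0 : Fin 4), 1), s((1 : Fin 4), 2), s((1 : Fin 4), 3)} := by
  ext e
  induction e with
  | _ a b =>
    rw [SimpleGraph.mem_edgeSet, rFG, SimpleGraph.fromRel_adj]
    simp only [Set.mem_insert_iff, Set.mem_singleton_iff, Sym2.eq_iff]
    fin_cases a <;> fin_cases b <;> simp

lemma rFG_star : matchNum rFG = 1 ∧
    MaximumMatchings rFG = (fun e => ({e} : Set (Sym2 (Fin 4)))) '' rFG.edgeSet := by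
  apply star_mm rFG 1
  · intro e he
    rw [rFG_edgeSet] at he
    rcases he with rfl | rfl | rfl <;> simp
  · exact ⟨s(0, 1), by rw [rFG_edgeSet]; exact Or.inl rfl⟩

lemma not_covers_sing12 : ¬ Covers ({s((1 : Fin 4), 2)} : Set (Sym2 (Fin 4))) 0 := by
  rintro ⟨e, he, h0⟩
  rw [Set.mem_singleton_iff] at he
  subst he
  rw [Sym2.mem_iff] at h0
  rcases h0 with h | h <;> exact absurd h (by decide)

lemma not_covers_sing13 : ¬ Covers ({s((1 : Fin 4), 3)} : Set (Sym2 (Fin 4))) 0 := by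
  rintro ⟨e, he, h0⟩
  rw [Set.mem_singleton_iff] at he
  subst he
  rw [Sym2.mem_iff] at h0
  rcases h0 with h | h <;> exact absurd h (by decide)

lemma rFG_typeA : TypeA rFG (0 : Fin 4) := by
  refine ⟨{s((1 : Fin 4), 2)}, ?_, not_covers_sing12⟩
  rw [rFG_star.2]
  exact ⟨s(1, 2), by rw [rFG_edgeSet]; exact Or.inr (Or.inl rfl), rfl⟩

lemma rF_typeA : TypeA rF.G rF.root := rFG_typeA

lemma rF_m : rF.m = 3 := by
  show mm rFG = 3
  rw [mm, rFG_star.2,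
    Set.ncard_image_of_injective _ Set.singleton_injective, rFG_edgeSet]
  rw [Set.ncard_insert_of_notMem (by simp [Sym2.eq_iff]) (Set.toFinite _),
    Set.ncard_pair (by simp [Sym2.eq_iff])]

lemma rF_m0 : rF.m0 = 2 := by
  show mm (rFG.induce {v : Fin 4 | v ≠ 0}) = 2
  rw [mm_del rFG (0 : Fin 4) rFG_typeA]
  have h : {M | M ∈ MaximumMatchings rFG ∧ ¬ Covers M (0 : Fin 4)}
      = {{s((1 : Fin 4), 2)}, {s((1 : Fin 4), 3)}} := by
    ext M
    simp only [Set.mem_setOf_eq, rFG_star.2, Set.mem_insert_iff, Set.mem_singleton_iff]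
    constructor
    · rintro ⟨⟨e, he, rfl⟩, hcov⟩
      rw [rFG_edgeSet] at he
      rcases he with rfl | rfl | rfl
      · exact absurd ⟨s(0, 1), rfl, by simp⟩ hcov
      · exact Or.inl rfl
      · exact Or.inr rfl
    · rintro (rfl | rfl)
      · exact ⟨⟨s(1, 2), by rw [rFG_edgeSet]; exact Or.inr (Or.inl rfl), rfl⟩,
          not_covers_sing12⟩
      · exact ⟨⟨s(1, 3), by rw [rFG_edgeSet]; exact Or.inr (Or.inr rfl), rfl⟩,
          not_covers_sing13⟩
  rw [h, Set.ncard_pair (by simp [Sym2.eq_iff])]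

end base

section iterate

lemma iter_fin_typeA (T : RGraph) (hF : Finite T.V) (hA : TypeA T.G T.root) (k : ℕ) :
    Finite (consC^[k] T).V ∧ TypeA (consC^[k] T).G (consC^[k] T).root := by
  induction k with
  | zero => exact ⟨hF, hA⟩
  | succ n ih =>
    rw [Function.iterate_succ_apply']
    haveI := ih.1
    exact ⟨consC_finite _, (consC_key _ ih.2).1⟩

lemma iter_values (T : RGraph) (hF : Finite T.V) (hA : TypeA T.G T.root)
    (a b : ℕ → ℤ) (ha0 : (T.m : ℤ) = a 0) (hb0 : (T.m0 : ℤ) = b 0)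
    (ha : ∀ k, a (k + 1) = 8 * a k + 3 * b k) (hb : ∀ k, b (k + 1) = 5 * a k + 3 * b k)
    (k : ℕ) : ((consC^[k] T).m : ℤ) = a k ∧ ((consC^[k] T).m0 : ℤ) = b k := by
  induction k with
  | zero => exact ⟨ha0, hb0⟩
  | succ n ih =>
    haveI := (iter_fin_typeA T hF hA n).1
    have hk := consC_key (consC^[n] T) (iter_fin_typeA T hF hA n).2
    rw [Function.iterate_succ_apply', ha n, hb n, ← ih.1, ← ih.2]
    constructor
    · rw [hk.2.1]; push_cast; ring
    · rw [hk.2.2]; push_cast; ring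

end iterate

/-- if `(T,r)` is a rooted tree of type A, then `(CT,s)` is of type A with
`m(CT) = 8m(T) + 3m₀(T)` and `m₀(CT) = 5m(T) + 3m₀(T)`; consequently
`m(C^kL) = G_{k+1}`, `m₀(C^kL) = G_{k+1} − 3G_k`, `m(C^kF) = 3G_{k+1} − 3G_k` and
`m₀(C^kF) = 2G_{k+1} − G_k`. -/
theorem stmt_10 :
    (∀ T : RGraph, Finite T.V → T.G.IsTree → TypeA T.G T.root →
      TypeA (consC T).G (consC T).root ∧
      (consC T).m = 8 * T.m + 3 * T.m0 ∧
      (consC T).m0 = 5 * T.m + 3 * T.m0) ∧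
    (∀ k : ℕ,
      ((consC^[k] rL).m : ℤ) = Gseq (k + 1) ∧
      ((consC^[k] rL).m0 : ℤ) = Gseq (k + 1) - 3 * Gseq k ∧
      ((consC^[k] rF).m : ℤ) = 3 * Gseq (k + 1) - 3 * Gseq k ∧
      ((consC^[k] rF).m0 : ℤ) = 2 * Gseq (k + 1) - Gseq k) := by
  constructor
  · intro T hF _ hA
    haveI := hF
    exact consC_key T hA
  · intro k
    have hL := iter_values rL inferInstance rL_typeA
      (fun j => Gseq (j + 1)) (fun j => Gseq (j + 1) - 3 * Gseq j)
      (by rw [rL_m]; simp [Gseq])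
      (by rw [rL_m0]; simp [Gseq])
      (fun j => by show Gseq (j + 2) = _; simp only [Gseq]; ring)
      (fun j => by show Gseq (j + 2) - 3 * Gseq (j + 1) = _; simp only [Gseq]; ring)
      k
    have hF := iter_values rF (inferInstanceAs (Finite (Fin 4))) rF_typeA
      (fun j => 3 * Gseq (j + 1) - 3 * Gseq j) (fun j => 2 * Gseq (j + 1) - Gseq j)
      (by rw [rF_m]; simp [Gseq])
      (by rw [rF_m0]; simp [Gseq])
      (fun j => by
        show 3 * Gseq (j + 2) - 3 * Gseq (j + 1) = _
        simp only [Gseq]; ring)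
      (fun j => by
        show 2 * Gseq (j + 2) - Gseq (j + 1) = _
        simp only [Gseq]; ring)
      k
    exact ⟨hL.1, hL.2, hF.1, hF.2⟩

end PaperMM
end

section
/- Let (T,r) be a rooted tree of order at least 2 whose branches (T_1,r_1), …, (T_k,r_k) are all of the same type. Then (T,r) is of the other type, m_0(T) = ∏_{j=1}^k m(T_j), and m_1(T) = ∑_{j=1}^k m_0(T_j) · ∏_{i ≠ j} m(T_i). -/
namespace PaperMM

open SimpleGraph

set_option linter.unusedSectionVars false
set_option linter.unusedVariables false
set_option maxHeartbeats 1600000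

/- ################ infrastructure ################ -/
section Infra
variable {V : Type} [Fintype V]

/-- matchings of `G` all of whose edges have both endpoints inside `S`. -/
def MIn (G : SimpleGraph V) (S : Set V) (M : Set (Sym2 V)) : Prop :=
  M ⊆ G.edgeSet ∧ (∀ e ∈ M, ∀ v ∈ e, v ∈ S) ∧
    M.Pairwise fun e f => ∀ v : V, ¬(v ∈ e ∧ v ∈ f)

noncomputable def muIn (G : SimpleGraph V) (S : Set V) : ℕ :=
  sSup {n | ∃ M, MIn G S M ∧ M.ncard = n}

def MaxIn (G : SimpleGraph V) (S : Set V) : Set (Set (Sym2 V)) :=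
  {M | MIn G S M ∧ M.ncard = muIn G S}

noncomputable def nmIn (G : SimpleGraph V) (S : Set V) : ℕ := (MaxIn G S).ncard

variable {G : SimpleGraph V} {S S' A B : Set V} {M M' : Set (Sym2 V)}

lemma edge_has_vertex {e : Sym2 V} : ∃ v, v ∈ e := by
  obtain ⟨u, v⟩ := e; exact ⟨u, Sym2.mem_mk_left u v⟩

lemma mIn_empty : MIn G S ∅ := by
  refine ⟨Set.empty_subset _, by simp, Set.pairwise_empty _⟩

lemma mIn_nonempty : ∃ n, n ∈ {n | ∃ M, MIn G S M ∧ M.ncard = n} :=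
  ⟨0, ∅, mIn_empty, Set.ncard_empty _⟩

lemma mIn_bdd : BddAbove {n | ∃ M, MIn G S M ∧ M.ncard = n} := by
  refine ⟨(Set.univ : Set (Sym2 V)).ncard, ?_⟩
  rintro n ⟨M, _, rfl⟩
  exact Set.ncard_le_ncard (Set.subset_univ M) Set.finite_univ

lemma MIn.ncard_le_muIn (h : MIn G S M) : M.ncard ≤ muIn G S :=
  le_csSup mIn_bdd ⟨M, h, rfl⟩

lemma muIn_le {n : ℕ} (h : ∀ M, MIn G S M → M.ncard ≤ n) : muIn G S ≤ n :=
  csSup_le ⟨0, ∅, mIn_empty, Set.ncard_empty _⟩ (by rintro m ⟨M, hM, rfl⟩; exact h M hM)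

lemma maxIn_nonempty : ∃ M, M ∈ MaxIn G S := by
  have := Nat.sSup_mem (s := {n | ∃ M, MIn G S M ∧ M.ncard = n}) mIn_nonempty mIn_bdd
  obtain ⟨M, hM, hc⟩ := this
  exact ⟨M, hM, hc⟩

lemma MIn.mono (h : MIn G S M) (hs : S ⊆ S') : MIn G S' M :=
  ⟨h.1, fun e he v hv => hs (h.2.1 e he v hv), h.2.2⟩

lemma MIn.subset (h : MIn G S M) (hm : M' ⊆ M) : MIn G S M' :=
  ⟨hm.trans h.1, fun e he v hv => h.2.1 e (hm he) v hv, h.2.2.mono hm⟩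

lemma muIn_mono (hs : S ⊆ S') : muIn G S ≤ muIn G S' :=
  muIn_le fun M hM => (hM.mono hs).ncard_le_muIn

lemma MIn.univ_iff : MIn G Set.univ M ↔ IsMatchingSet G M := by
  constructor
  · exact fun h => ⟨h.1, h.2.2⟩
  · exact fun h => ⟨h.1, fun _ _ _ _ => Set.mem_univ _, h.2⟩

lemma matchNum_eq_muIn_univ : matchNum G = muIn G Set.univ := by
  unfold matchNum muIn
  congr 1
  ext n
  simp only [Set.mem_setOf_eq]
  exact ⟨fun ⟨M, h, hc⟩ => ⟨M, MIn.univ_iff.2 h, hc⟩, fun ⟨M, h, hc⟩ => ⟨M, MIn.univ_iff.1 h, hc⟩⟩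

lemma maximumMatchings_eq_maxIn_univ : MaximumMatchings G = MaxIn G Set.univ := by
  ext M
  simp only [MaximumMatchings, MaxIn, Set.mem_setOf_eq, MIn.univ_iff, matchNum_eq_muIn_univ]

lemma mm_eq_nmIn_univ : mm G = nmIn G Set.univ := by
  rw [mm, maximumMatchings_eq_maxIn_univ]; rfl

end Infra

section Transfer
variable {V : Type} [Fintype V] {G : SimpleGraph V} {S : Set V}

def lift (S : Set V) : Sym2 ↥S → Sym2 V := Sym2.map Subtype.val

lemma lift_inj : Function.Injective (lift S) := Sym2.map.injective Subtype.val_injective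

lemma mem_lift {e : Sym2 ↥S} {v : V} : v ∈ lift S e ↔ ∃ w : ↥S, w ∈ e ∧ (w : V) = v := by
  simp [lift, Sym2.mem_map]

lemma lift_edge {e : Sym2 ↥S} : lift S e ∈ G.edgeSet ↔ e ∈ (G.induce S).edgeSet := by
  obtain ⟨a, b⟩ := e
  simp [lift, Sym2.map_pair_eq]

lemma isMatchingSet_induce_iff {M : Set (Sym2 ↥S)} :
    IsMatchingSet (G.induce S) M ↔ MIn G S (lift S '' M) := by
  constructor
  · rintro ⟨hsub, hpw⟩
    refine ⟨?_, ?_, ?_⟩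
    · rintro e ⟨f, hf, rfl⟩; exact lift_edge.2 (hsub hf)
    · rintro e ⟨f, hf, rfl⟩ v hv
      obtain ⟨w, _, rfl⟩ := mem_lift.1 hv
      exact w.2
    · rintro _ ⟨e, he, rfl⟩ _ ⟨f, hf, rfl⟩ hne v ⟨hve, hvf⟩
      have hef : e ≠ f := fun h => hne (by rw [h])
      obtain ⟨w, hw, rfl⟩ := mem_lift.1 hve
      obtain ⟨w', hw', hww'⟩ := mem_lift.1 hvf
      have hw2 : w' = w := Subtype.val_injective hww'
      exact hpw he hf hef w ⟨hw, hw2 ▸ hw'⟩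
  · rintro ⟨hsub, _, hpw⟩
    refine ⟨?_, ?_⟩
    · intro e he
      exact lift_edge.1 (hsub ⟨e, he, rfl⟩)
    · intro e he f hf hef w ⟨hwe, hwf⟩
      have hne : lift S e ≠ lift S f := fun h => hef (lift_inj h)
      exact hpw ⟨e, he, rfl⟩ ⟨f, hf, rfl⟩ hne (w : V)
        ⟨mem_lift.2 ⟨w, hwe, rfl⟩, mem_lift.2 ⟨w, hwf, rfl⟩⟩

lemma exists_lift {M' : Set (Sym2 V)} (h : MIn G S M') : ∃ M, lift S '' M = M' := by
  refine ⟨lift S ⁻¹' M', Set.image_preimage_eq_of_subset ?_⟩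
  rintro e he
  obtain ⟨u, v⟩ := e
  have hu := h.2.1 _ he u (Sym2.mem_mk_left u v)
  have hv := h.2.1 _ he v (Sym2.mem_mk_right u v)
  exact ⟨s(⟨u, hu⟩, ⟨v, hv⟩), by simp [lift, Sym2.map_pair_eq]⟩

lemma ncard_lift (M : Set (Sym2 ↥S)) : (lift S '' M).ncard = M.ncard :=
  Set.ncard_image_of_injective _ lift_inj

lemma matchNum_induce : matchNum (G.induce S) = muIn G S := by
  unfold matchNum muIn
  congr 1
  ext n
  simp only [Set.mem_setOf_eq]
  constructor
  · rintro ⟨M, h, rfl⟩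
    exact ⟨lift S '' M, isMatchingSet_induce_iff.1 h, ncard_lift M⟩
  · rintro ⟨M', h, rfl⟩
    obtain ⟨M, rfl⟩ := exists_lift h
    exact ⟨M, isMatchingSet_induce_iff.2 h, (ncard_lift M).symm⟩

lemma image_maximumMatchings :
    (Set.image (lift S)) '' MaximumMatchings (G.induce S) = MaxIn G S := by
  ext M'
  simp only [MaximumMatchings, MaxIn, Set.mem_image, Set.mem_setOf_eq]
  constructor
  · rintro ⟨M, ⟨h1, h2⟩, rfl⟩
    exact ⟨isMatchingSet_induce_iff.1 h1, by rw [ncard_lift, h2, matchNum_induce]⟩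
  · rintro ⟨h1, h2⟩
    obtain ⟨M, rfl⟩ := exists_lift h1
    exact ⟨M, ⟨isMatchingSet_induce_iff.2 h1,
      by rw [matchNum_induce, ← ncard_lift M, h2]⟩, rfl⟩

lemma mm_induce : mm (G.induce S) = nmIn G S := by
  rw [mm, nmIn, ← image_maximumMatchings,
    Set.ncard_image_of_injective _ (Set.image_injective.2 lift_inj)]

lemma covers_lift {M : Set (Sym2 ↥S)} {x : V} (h : x ∈ S) :
    Covers (lift S '' M) x ↔ Covers M ⟨x, h⟩ := by
  constructor
  · rintro ⟨_, ⟨e, he, rfl⟩, hx⟩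
    obtain ⟨w, hw, hwx⟩ := mem_lift.1 hx
    exact ⟨e, he, by rwa [show (⟨x, h⟩ : ↥S) = w from Subtype.ext hwx.symm]⟩
  · rintro ⟨e, he, hx⟩
    exact ⟨lift S e, ⟨e, he, rfl⟩, mem_lift.2 ⟨⟨x, h⟩, hx, rfl⟩⟩

lemma typeA_induce {x : V} (h : x ∈ S) :
    TypeA (G.induce S) ⟨x, h⟩ ↔ ∃ M ∈ MaxIn G S, ¬ Covers M x := by
  constructor
  · rintro ⟨M, hM, hc⟩
    refine ⟨lift S '' M, ?_, fun hcc => hc ((covers_lift h).1 hcc)⟩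
    rw [← image_maximumMatchings]; exact ⟨M, hM, rfl⟩
  · rintro ⟨M', hM', hc⟩
    rw [← image_maximumMatchings] at hM'
    obtain ⟨M, hM, rfl⟩ := hM'
    exact ⟨M, hM, fun hcc => hc ((covers_lift h).2 hcc)⟩

end Transfer

section Union
variable {V : Type} [Fintype V] {G : SimpleGraph V} {A B : Set V} {M P Q : Set (Sym2 V)}

/-- edges of `M` lying entirely inside `S`. -/
def resM (S : Set V) (M : Set (Sym2 V)) : Set (Sym2 V) := {e ∈ M | ∀ v ∈ e, v ∈ S}

lemma resM_subset : resM A M ⊆ M := fun e he => he.1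

lemma symm_rel : Symmetric (fun e f : Sym2 V => ∀ v : V, ¬(v ∈ e ∧ v ∈ f)) :=
  fun e f h v hv => h v ⟨hv.2, hv.1⟩

lemma allA_disjoint (hd : Disjoint A B) (hP : ∀ e ∈ P, ∀ v ∈ e, v ∈ A)
    (hQ : ∀ e ∈ Q, ∀ v ∈ e, v ∈ B) : Disjoint P Q := by
  rw [Set.disjoint_left]
  intro e heP heQ
  obtain ⟨v, hv⟩ := edge_has_vertex (e := e)
  exact Set.disjoint_left.1 hd (hP e heP v hv) (hQ e heQ v hv)

lemma MIn.union (hP : MIn G A P) (hQ : MIn G B Q) (hd : Disjoint A B) :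
    MIn G (A ∪ B) (P ∪ Q) := by
  refine ⟨Set.union_subset hP.1 hQ.1, ?_, ?_⟩
  · rintro e (he | he) v hv
    · exact Or.inl (hP.2.1 e he v hv)
    · exact Or.inr (hQ.2.1 e he v hv)
  · haveI : Std.Symm (fun e f : Sym2 V => ∀ v : V, ¬(v ∈ e ∧ v ∈ f)) := ⟨fun a b h => symm_rel h⟩
    rw [Set.pairwise_union_of_symm]
    refine ⟨hP.2.2, hQ.2.2, ?_⟩
    intro e he f hf hne v ⟨hve, hvf⟩
    exact Set.disjoint_left.1 hd (hP.2.1 e he v hve) (hQ.2.1 f hf v hvf)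

lemma MIn.split (h : MIn G (A ∪ B) M) (hd : Disjoint A B)
    (hcross : ∀ u ∈ A, ∀ v ∈ B, ¬ G.Adj u v) :
    MIn G A (resM A M) ∧ MIn G B (resM B M) ∧ resM A M ∪ resM B M = M := by
  have hsplit : ∀ e ∈ M, (∀ v ∈ e, v ∈ A) ∨ (∀ v ∈ e, v ∈ B) := by
    intro e he
    obtain ⟨u, v⟩ := e
    have hadj : G.Adj u v := h.1 he
    have hu := h.2.1 _ he u (Sym2.mem_mk_left u v)
    have hv := h.2.1 _ he v (Sym2.mem_mk_right u v)
    have hmem : ∀ w, w ∈ s(u, v) → w = u ∨ w = v := by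
      intro w hw; exact Sym2.mem_iff.1 hw
    rcases hu with hu | hu <;> rcases hv with hv | hv
    · left; intro w hw; rcases hmem w hw with rfl | rfl <;> assumption
    · exact absurd hadj (hcross u hu v hv)
    · exact absurd hadj.symm (hcross v hv u hu)
    · right; intro w hw; rcases hmem w hw with rfl | rfl <;> assumption
  refine ⟨⟨fun e he => h.1 he.1, fun e he => he.2, h.2.2.mono resM_subset⟩,
    ⟨fun e he => h.1 he.1, fun e he => he.2, h.2.2.mono resM_subset⟩, ?_⟩
  ext e
  constructor
  · rintro (he | he) <;> exact he.1
  · intro he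
    rcases hsplit e he with hA | hB
    · exact Or.inl ⟨he, hA⟩
    · exact Or.inr ⟨he, hB⟩

lemma resM_union_left (hd : Disjoint A B) (hP : ∀ e ∈ P, ∀ v ∈ e, v ∈ A)
    (hQ : ∀ e ∈ Q, ∀ v ∈ e, v ∈ B) : resM A (P ∪ Q) = P := by
  ext e
  constructor
  · rintro ⟨he | he, hall⟩
    · exact he
    · obtain ⟨v, hv⟩ := edge_has_vertex (e := e)
      exact absurd (hall v hv) (fun hA => Set.disjoint_left.1 hd hA (hQ e he v hv))
  · intro he
    exact ⟨Or.inl he, hP e he⟩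

lemma resM_union_right (hd : Disjoint A B) (hP : ∀ e ∈ P, ∀ v ∈ e, v ∈ A)
    (hQ : ∀ e ∈ Q, ∀ v ∈ e, v ∈ B) : resM B (P ∪ Q) = Q := by
  rw [Set.union_comm]
  exact resM_union_left hd.symm hQ hP

lemma muIn_union (hd : Disjoint A B) (hcross : ∀ u ∈ A, ∀ v ∈ B, ¬ G.Adj u v) :
    muIn G (A ∪ B) = muIn G A + muIn G B := by
  apply le_antisymm
  · apply muIn_le
    intro M hM
    obtain ⟨hA, hB, hun⟩ := hM.split hd hcross
    have hdis : Disjoint (resM A M) (resM B M) := allA_disjoint hd hA.2.1 hB.2.1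
    calc M.ncard = (resM A M ∪ resM B M).ncard := by rw [hun]
    _ = (resM A M).ncard + (resM B M).ncard := Set.ncard_union_eq hdis
    _ ≤ muIn G A + muIn G B := Nat.add_le_add hA.ncard_le_muIn hB.ncard_le_muIn
  · obtain ⟨P, hP, hPc⟩ := maxIn_nonempty (G := G) (S := A)
    obtain ⟨Q, hQ, hQc⟩ := maxIn_nonempty (G := G) (S := B)
    have hdis : Disjoint P Q := allA_disjoint hd hP.2.1 hQ.2.1
    have := (hP.union hQ hd).ncard_le_muIn
    rwa [Set.ncard_union_eq hdis, hPc, hQc] at this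

lemma maxIn_union_eq (hd : Disjoint A B) (hcross : ∀ u ∈ A, ∀ v ∈ B, ¬ G.Adj u v) :
    MaxIn G (A ∪ B) = (fun p : Set (Sym2 V) × Set (Sym2 V) => p.1 ∪ p.2) ''
      (MaxIn G A ×ˢ MaxIn G B) := by
  ext M
  constructor
  · rintro ⟨hM, hc⟩
    obtain ⟨hA, hB, hun⟩ := hM.split hd hcross
    have hdis : Disjoint (resM A M) (resM B M) := allA_disjoint hd hA.2.1 hB.2.1
    have hcard : (resM A M).ncard + (resM B M).ncard = muIn G A + muIn G B := by
      rw [← Set.ncard_union_eq hdis, hun, hc, muIn_union hd hcross]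
    have h1 : (resM A M).ncard = muIn G A ∧ (resM B M).ncard = muIn G B := by
      have := hA.ncard_le_muIn
      have := hB.ncard_le_muIn
      omega
    exact ⟨(resM A M, resM B M), Set.mk_mem_prod ⟨hA, h1.1⟩ ⟨hB, h1.2⟩, hun⟩
  · rintro ⟨⟨P, Q⟩, ⟨⟨hP, hPc⟩, ⟨hQ, hQc⟩⟩, rfl⟩
    have hdis : Disjoint P Q := allA_disjoint hd hP.2.1 hQ.2.1
    refine ⟨hP.union hQ hd, ?_⟩
    rw [Set.ncard_union_eq hdis, hPc, hQc, muIn_union hd hcross]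

lemma nmIn_union (hd : Disjoint A B) (hcross : ∀ u ∈ A, ∀ v ∈ B, ¬ G.Adj u v) :
    nmIn G (A ∪ B) = nmIn G A * nmIn G B := by
  rw [nmIn, maxIn_union_eq hd hcross]
  have hinj : Set.InjOn (fun p : Set (Sym2 V) × Set (Sym2 V) => p.1 ∪ p.2)
      (MaxIn G A ×ˢ MaxIn G B) := by
    rintro ⟨P1, Q1⟩ ⟨hP1', hQ1'⟩ ⟨P2, Q2⟩ ⟨hP2', hQ2'⟩ heq
    simp only at heq
    replace hP1 : P1 ∈ MaxIn G A := hP1'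
    replace hQ1 : Q1 ∈ MaxIn G B := hQ1'
    replace hP2 : P2 ∈ MaxIn G A := hP2'
    replace hQ2 : Q2 ∈ MaxIn G B := hQ2'
    have e1 : P1 = P2 := by
      rw [← resM_union_left hd hP1.1.2.1 hQ1.1.2.1, heq,
        resM_union_left hd hP2.1.2.1 hQ2.1.2.1]
    have e2 : Q1 = Q2 := by
      rw [← resM_union_right hd hP1.1.2.1 hQ1.1.2.1, heq,
        resM_union_right hd hP2.1.2.1 hQ2.1.2.1]
    simp [e1, e2]
  rw [Set.ncard_image_of_injOn hinj, ← Nat.card_coe_set_eq,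
    Nat.card_congr (Equiv.Set.prod _ _), Nat.card_prod,
    Nat.card_coe_set_eq, Nat.card_coe_set_eq, nmIn, nmIn]

lemma mIn_empty_set (h : MIn G ∅ M) : M = ∅ := by
  ext e
  simp only [Set.mem_empty_iff_false, iff_false]
  intro he
  obtain ⟨v, hv⟩ := edge_has_vertex (e := e)
  exact h.2.1 e he v hv

lemma muIn_empty : muIn G (∅ : Set V) = 0 := by
  apply Nat.le_zero.1
  apply muIn_le
  intro M hM
  rw [mIn_empty_set hM, Set.ncard_empty]

lemma nmIn_empty : nmIn G (∅ : Set V) = 1 := by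
  have : MaxIn G (∅ : Set V) = {∅} := by
    ext M
    constructor
    · rintro ⟨hM, _⟩; exact mIn_empty_set hM
    · rintro rfl; exact ⟨mIn_empty, by rw [muIn_empty, Set.ncard_empty]⟩
  rw [nmIn, this, Set.ncard_singleton]

lemma muIn_nmIn_biUnion (t : Finset V) (S : V → Set V)
    (hd : ∀ x ∈ t, ∀ y ∈ t, x ≠ y → Disjoint (S x) (S y))
    (hcross : ∀ x ∈ t, ∀ y ∈ t, x ≠ y → ∀ u ∈ S x, ∀ v ∈ S y, ¬ G.Adj u v) :
    muIn G (⋃ x ∈ t, S x) = ∑ x ∈ t, muIn G (S x) ∧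
    nmIn G (⋃ x ∈ t, S x) = ∏ x ∈ t, nmIn G (S x) := by
  classical
  induction t using Finset.induction_on with
  | empty => simpa using ⟨muIn_empty, nmIn_empty⟩
  | @insert a s ha ih =>
    have hU : (⋃ x ∈ insert a s, S x) = S a ∪ ⋃ x ∈ s, S x := by
      simp [Finset.set_biUnion_insert]
    have hd2 : Disjoint (S a) (⋃ x ∈ s, S x) := by
      rw [Set.disjoint_right]
      rintro v hv hva
      simp only [Set.mem_iUnion] at hv
      obtain ⟨y, hy, hvy⟩ := hv
      have hay : a ≠ y := fun h => ha (h ▸ hy)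
      exact Set.disjoint_left.1
        (hd a (Finset.mem_insert_self a s) y (Finset.mem_insert_of_mem hy) hay) hva hvy
    have hcross2 : ∀ u ∈ S a, ∀ v ∈ ⋃ x ∈ s, S x, ¬ G.Adj u v := by
      intro u hu v hv
      simp only [Set.mem_iUnion] at hv
      obtain ⟨y, hy, hvy⟩ := hv
      have hay : a ≠ y := fun h => ha (h ▸ hy)
      exact hcross a (Finset.mem_insert_self a s) y (Finset.mem_insert_of_mem hy) hay u hu v hvy
    have ih' := ih (fun x hx y hy => hd x (Finset.mem_insert_of_mem hx) y (Finset.mem_insert_of_mem hy))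
      (fun x hx y hy => hcross x (Finset.mem_insert_of_mem hx) y (Finset.mem_insert_of_mem hy))
    constructor
    · rw [hU, muIn_union hd2 hcross2, ih'.1, Finset.sum_insert ha]
    · rw [hU, nmIn_union hd2 hcross2, ih'.2, Finset.prod_insert ha]

end Union

section VertexDel
variable {V : Type} [Fintype V] {G : SimpleGraph V} {S : Set V} {M : Set (Sym2 V)} {x : V}

lemma mIn_diff_singleton_iff (hx : x ∈ S) :
    (MIn G S M ∧ ¬ Covers M x) ↔ MIn G (S \ {x}) M := by
  constructor
  · rintro ⟨hM, hc⟩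
    refine ⟨hM.1, fun e he v hv => ⟨hM.2.1 e he v hv, fun hvx => hc ⟨e, he, hvx ▸ hv⟩⟩, hM.2.2⟩
  · intro hM
    refine ⟨hM.mono Set.diff_subset, fun ⟨e, he, hxe⟩ => (hM.2.1 e he x hxe).2 rfl⟩

lemma muIn_le_diff_add_one : muIn G S ≤ muIn G (S \ {x}) + 1 := by
  obtain ⟨M, hM, hc⟩ := maxIn_nonempty (G := G) (S := S)
  by_cases hcov : Covers M x
  · obtain ⟨e₀, he₀, hxe₀⟩ := hcov
    have hsub : MIn G (S \ {x}) (M \ {e₀}) := by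
      refine ⟨fun e he => hM.1 he.1, ?_, hM.2.2.mono Set.diff_subset⟩
      intro e he v hv
      refine ⟨hM.2.1 e he.1 v hv, fun hvx => ?_⟩
      exact hM.2.2 he₀ he.1 (fun h => he.2 (by simp [h.symm])) x ⟨hxe₀, hvx ▸ hv⟩
    have hcard : (M \ {e₀}).ncard + 1 = M.ncard := Set.ncard_diff_singleton_add_one he₀
    calc muIn G S = M.ncard := hc.symm
    _ = (M \ {e₀}).ncard + 1 := hcard.symm
    _ ≤ muIn G (S \ {x}) + 1 := by exact Nat.add_le_add_right hsub.ncard_le_muIn 1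
  · have : MIn G (S \ {x}) M := by
      by_cases hx : x ∈ S
      · exact (mIn_diff_singleton_iff hx).1 ⟨hM, hcov⟩
      · refine ⟨hM.1, fun e he v hv => ⟨hM.2.1 e he v hv, fun h => hx (h ▸ hM.2.1 e he v hv)⟩, hM.2.2⟩
    calc muIn G S = M.ncard := hc.symm
    _ ≤ muIn G (S \ {x}) := this.ncard_le_muIn
    _ ≤ _ := Nat.le_succ _

lemma exists_max_avoiding_iff (hx : x ∈ S) :
    (∃ M ∈ MaxIn G S, ¬ Covers M x) ↔ muIn G (S \ {x}) = muIn G S := by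
  constructor
  · rintro ⟨M, ⟨hM, hc⟩, hcov⟩
    have h1 : MIn G (S \ {x}) M := (mIn_diff_singleton_iff hx).1 ⟨hM, hcov⟩
    exact le_antisymm (muIn_mono Set.diff_subset) (hc ▸ h1.ncard_le_muIn)
  · intro heq
    obtain ⟨M, hM, hc⟩ := maxIn_nonempty (G := G) (S := S \ {x})
    obtain ⟨hM', hcov⟩ := (mIn_diff_singleton_iff hx).2 hM
    exact ⟨M, ⟨hM', by rw [hc, heq]⟩, hcov⟩

end VertexDel

section TreeStruct
variable {V : Type} {G : SimpleGraph V} {r x y v u : V}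

lemma branch_self (h : G.Adj r x) : x ∈ branchSet G r x :=
  ⟨Walk.nil, by simp [h.ne]⟩

lemma root_not_mem_branch : r ∉ branchSet G r x :=
  fun ⟨p, hp⟩ => hp p.end_mem_support

lemma branch_extend (hv : v ∈ branchSet G r x) (hadj : G.Adj v u) (hu : u ≠ r) :
    u ∈ branchSet G r x := by
  obtain ⟨p, hp⟩ := hv
  refine ⟨p.concat hadj, ?_⟩
  rw [Walk.support_concat]
  simp only [List.concat_eq_append, List.mem_append, List.mem_singleton]
  rintro (h | h)
  · exact hp h
  · exact hu h.symm

lemma branch_exists (hconn : G.Connected) (hv : v ≠ r) :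
    ∃ x, G.Adj r x ∧ v ∈ branchSet G r x := by
  classical
  obtain ⟨w⟩ := hconn.preconnected r v
  obtain ⟨q, hq⟩ : ∃ q : G.Walk r v, q.IsPath := ⟨w.toPath, w.toPath.2⟩
  cases q with
  | nil => exact absurd rfl hv.symm
  | cons h q' =>
    refine ⟨_, h, q', ?_⟩
    have := hq.2
    rw [Walk.support_cons] at this
    exact (List.nodup_cons.1 this).1

lemma branch_disjoint (htree : G.IsTree) (hx : G.Adj r x) (hy : G.Adj r y) (hxy : x ≠ y) :
    Disjoint (branchSet G r x) (branchSet G r y) := by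
  classical
  rw [Set.disjoint_left]
  rintro v ⟨p, hp⟩ ⟨q, hq⟩
  have hxp : r ∉ (p.toPath : G.Walk x v).support :=
    fun h => hp (Walk.support_toPath_subset p h)
  have hyq : r ∉ (q.toPath : G.Walk y v).support :=
    fun h => hq (Walk.support_toPath_subset q h)
  have heq := htree.IsAcyclic.path_unique
    ⟨Walk.cons hx (p.toPath : G.Walk x v), (p.toPath).2.cons hxp⟩
    ⟨Walk.cons hy (q.toPath : G.Walk y v), (q.toPath).2.cons hyq⟩
  have hsup := congrArg (fun P : G.Path r v => (P : G.Walk r v).support) heq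
  simp only [Walk.support_cons] at hsup
  rw [Walk.support_eq_cons (p.toPath : G.Walk x v),
    Walk.support_eq_cons (q.toPath : G.Walk y v)] at hsup
  injection hsup with h1 h2
  injection h2 with h3 h4
  exact hxy h3

lemma branch_union (htree : G.IsTree) :
    {v : V | v ≠ r} ⊆ ⋃ x ∈ {x | G.Adj r x}, branchSet G r x := by
  intro v hv
  obtain ⟨x, hx, hmem⟩ := branch_exists htree.isConnected hv
  exact Set.mem_biUnion hx hmem

end TreeStruct

section Counting
variable {α : Type} [Finite α] {W : Type}

lemma ncard_finset_biUnion (t : Finset W) (f : W → Set α)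
    (hd : ∀ x ∈ t, ∀ y ∈ t, x ≠ y → Disjoint (f x) (f y)) :
    (⋃ x ∈ t, f x).ncard = ∑ x ∈ t, (f x).ncard := by
  classical
  induction t using Finset.induction_on with
  | empty => simp
  | @insert a s ha ih =>
    have hU : (⋃ x ∈ insert a s, f x) = f a ∪ ⋃ x ∈ s, f x := by
      simp [Finset.set_biUnion_insert]
    have hdis : Disjoint (f a) (⋃ x ∈ s, f x) := by
      rw [Set.disjoint_right]
      rintro v hv hva
      simp only [Set.mem_iUnion] at hv
      obtain ⟨y, hy, hvy⟩ := hv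
      have hay : a ≠ y := fun h => ha (h ▸ hy)
      exact Set.disjoint_left.1
        (hd a (Finset.mem_insert_self a s) y (Finset.mem_insert_of_mem hy) hay) hva hvy
    rw [hU, Set.ncard_union_eq hdis, Finset.sum_insert ha,
      ih (fun x hx y hy => hd x (Finset.mem_insert_of_mem hx) y (Finset.mem_insert_of_mem hy))]

end Counting

section Assemble
variable {V : Type} [Fintype V] {G : SimpleGraph V} {r x y : V} {M P : Set (Sym2 V)}

lemma mem_Nf : x ∈ (G.neighborSet r).toFinite.toFinset ↔ G.Adj r x := by
  simp [Set.Finite.mem_toFinset]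

lemma branch_cross (htree : G.IsTree) (hx : G.Adj r x) (hy : G.Adj r y) (hxy : x ≠ y) :
    ∀ u ∈ branchSet G r x, ∀ v ∈ branchSet G r y, ¬ G.Adj u v := by
  intro u hu v hv hadj
  have hvr : v ≠ r := fun h => root_not_mem_branch (h ▸ hv)
  have : v ∈ branchSet G r x := branch_extend hu hadj hvr
  exact Set.disjoint_left.1 (branch_disjoint htree hx hy hxy) this hv

lemma branch_biUnion (htree : G.IsTree) :
    (⋃ x ∈ (G.neighborSet r).toFinite.toFinset, branchSet G r x) = Set.univ \ {r} := by
  ext v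
  simp only [Set.mem_iUnion, Set.mem_diff, Set.mem_univ, Set.mem_singleton_iff, true_and]
  constructor
  · rintro ⟨x, hx, hv⟩
    exact fun h => root_not_mem_branch (h ▸ hv)
  · intro hv
    obtain ⟨x, hx, hmem⟩ := branch_exists htree.isConnected hv
    exact ⟨x, mem_Nf.2 hx, hmem⟩

/-- decomposition of `μ` and `nm` of `G - r` into the branches. -/
lemma mu_nm_del_root (htree : G.IsTree) :
    muIn G (Set.univ \ {r}) =
      ∑ x ∈ (G.neighborSet r).toFinite.toFinset, muIn G (branchSet G r x) ∧
    nmIn G (Set.univ \ {r}) =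
      ∏ x ∈ (G.neighborSet r).toFinite.toFinset, nmIn G (branchSet G r x) := by
  rw [← branch_biUnion htree]
  exact muIn_nmIn_biUnion _ _
    (fun a ha b hb hab => branch_disjoint htree (mem_Nf.1 ha) (mem_Nf.1 hb) hab)
    (fun a ha b hb hab => branch_cross htree (mem_Nf.1 ha) (mem_Nf.1 hb) hab)

lemma x_not_mem_other_branch (htree : G.IsTree) (hx : G.Adj r x) (hy : G.Adj r y)
    (hxy : x ≠ y) : x ∉ branchSet G r y :=
  fun h => Set.disjoint_left.1 (branch_disjoint htree hx hy hxy) (branch_self hx) h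

/-- decomposition of `μ` and `nm` of `G - r - x` into the branches. -/
lemma mu_nm_del_root_x (htree : G.IsTree) (hx : G.Adj r x) :
    muIn G ((Set.univ \ {r}) \ {x}) = muIn G (branchSet G r x \ {x}) +
      ∑ y ∈ (G.neighborSet r \ {x}).toFinite.toFinset, muIn G (branchSet G r y) ∧
    nmIn G ((Set.univ \ {r}) \ {x}) = nmIn G (branchSet G r x \ {x}) *
      ∏ y ∈ (G.neighborSet r \ {x}).toFinite.toFinset, nmIn G (branchSet G r y) := by
  classical
  have herase : (G.neighborSet r \ {x}).toFinite.toFinset =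
      ((G.neighborSet r).toFinite.toFinset).erase x := by
    ext y
    simp only [Set.Finite.mem_toFinset, Finset.mem_erase, Set.mem_diff,
      Set.mem_singleton_iff, mem_neighborSet]
    exact and_comm
  rw [herase]
  set Nf := (G.neighborSet r).toFinite.toFinset with hNf
  set S' : V → Set V := fun y => if y = x then branchSet G r x \ {x} else branchSet G r y
    with hS'
  have hsub : ∀ y, S' y ⊆ branchSet G r y := by
    intro y v hv
    by_cases h : y = x
    · subst h; rw [hS'] at hv; simp only [if_pos rfl] at hv; exact hv.1
    · rw [hS'] at hv; simpa [if_neg h] using hv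
  have hdisj : ∀ a ∈ Nf, ∀ b ∈ Nf, a ≠ b → Disjoint (S' a) (S' b) := fun a ha b hb hab =>
    ((branch_disjoint htree (mem_Nf.1 ha) (mem_Nf.1 hb) hab).mono (hsub a) (hsub b))
  have hcross : ∀ a ∈ Nf, ∀ b ∈ Nf, a ≠ b → ∀ u ∈ S' a, ∀ v ∈ S' b, ¬ G.Adj u v :=
    fun a ha b hb hab u hu v hv =>
      branch_cross htree (mem_Nf.1 ha) (mem_Nf.1 hb) hab u (hsub a hu) v (hsub b hv)
  have hxNf : x ∈ Nf := mem_Nf.2 hx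
  have hU : (⋃ y ∈ Nf, S' y) = (Set.univ \ {r}) \ {x} := by
    rw [← branch_biUnion (r := r) htree, ← hNf]
    ext v
    simp only [Set.mem_iUnion, Set.mem_diff, Set.mem_singleton_iff]
    constructor
    · rintro ⟨y, hy, hv⟩
      refine ⟨⟨y, hy, hsub y hv⟩, ?_⟩
      intro hvx
      by_cases h : y = x
      · subst h; rw [hS'] at hv; simp only [if_pos rfl] at hv; exact hv.2 hvx
      · rw [hS'] at hv; simp only [if_neg h] at hv
        exact x_not_mem_other_branch htree hx (mem_Nf.1 hy) (fun hh => h hh.symm) (hvx ▸ hv)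
    · rintro ⟨⟨y, hy, hv⟩, hvx⟩
      refine ⟨y, hy, ?_⟩
      by_cases h : y = x
      · subst h; rw [hS']; simp only [if_pos rfl]; exact ⟨hv, hvx⟩
      · rw [hS']; simpa [if_neg h] using hv
  obtain ⟨h1, h2⟩ := muIn_nmIn_biUnion (G := G) Nf S' hdisj hcross
  rw [hU] at h1 h2
  constructor
  · rw [h1, ← Finset.add_sum_erase _ _ hxNf]
    congr 1
    · rw [hS']; simp
    · apply Finset.sum_congr rfl
      intro y hy
      rw [hS']; simp only [if_neg (Finset.ne_of_mem_erase hy)]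
  · rw [h2, ← Finset.mul_prod_erase _ _ hxNf]
    congr 1
    · rw [hS']; simp
    · apply Finset.prod_congr rfl
      intro y hy
      rw [hS']; simp only [if_neg (Finset.ne_of_mem_erase hy)]

end Assemble

section Main
variable {V : Type} [Fintype V] {G : SimpleGraph V} {r x : V} {M P : Set (Sym2 V)}

lemma edge_at_r (hM : MIn G Set.univ M) (hc : Covers M r) :
    ∃ x, G.Adj r x ∧ s(r, x) ∈ M := by
  obtain ⟨e, he, hre⟩ := hc
  have hedge := hM.1 he
  obtain ⟨u, v⟩ := e
  rw [Sym2.mem_iff] at hre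
  rw [SimpleGraph.mem_edgeSet] at hedge
  rcases hre with rfl | rfl
  · exact ⟨v, hedge, he⟩
  · exact ⟨u, hedge.symm, by rwa [Sym2.eq_swap]⟩

lemma remove_edge_at_r (hM : MIn G Set.univ M) (hadj : G.Adj r x)
    (hmem : s(r, x) ∈ M) :
    MIn G ((Set.univ \ {r}) \ {x}) (M \ {s(r, x)}) := by
  refine ⟨fun e he => hM.1 he.1, ?_, hM.2.2.mono Set.diff_subset⟩
  intro e he v hv
  have hne : s(r, x) ≠ e := fun h => he.2 (by simp [h.symm])
  have hpw := hM.2.2 hmem he.1 hne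
  simp only [Set.mem_diff, Set.mem_univ, Set.mem_singleton_iff, true_and]
  constructor
  · exact fun hvr => hpw r ⟨Sym2.mem_mk_left r x, hvr ▸ hv⟩
  · exact fun hvx => hpw x ⟨Sym2.mem_mk_right r x, hvx ▸ hv⟩

lemma insert_edge_at_r (hadj : G.Adj r x) (hP : MIn G ((Set.univ \ {r}) \ {x}) P) :
    MIn G Set.univ (insert (s(r, x)) P) ∧ (s(r, x)) ∉ P := by
  have hvert : ∀ e ∈ P, ∀ v ∈ e, v ≠ r ∧ v ≠ x := by
    intro e he v hv
    have := hP.2.1 e he v hv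
    simp only [Set.mem_diff, Set.mem_univ, Set.mem_singleton_iff, true_and] at this
    exact this
  have hnot : s(r, x) ∉ P :=
    fun h => (hvert _ h r (Sym2.mem_mk_left r x)).1 rfl
  refine ⟨⟨?_, fun e he v hv => trivial, ?_⟩, hnot⟩
  · rw [Set.insert_subset_iff]
    exact ⟨hadj, hP.1⟩
  · haveI : Std.Symm (fun e f : Sym2 V => ∀ v : V, ¬(v ∈ e ∧ v ∈ f)) := ⟨fun a b h => symm_rel h⟩
    rw [Set.pairwise_insert_of_symm]
    refine ⟨hP.2.2, ?_⟩
    intro e he hne v ⟨hv1, hv2⟩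
    rw [Sym2.mem_iff] at hv1
    rcases hv1 with rfl | rfl
    · exact (hvert e he v hv2).1 rfl
    · exact (hvert e he v hv2).2 rfl

lemma branchTypeA_iff (hadj : G.Adj r x) :
    BranchTypeA G r x ↔
      muIn G (branchSet G r x \ {x}) = muIn G (branchSet G r x) := by
  constructor
  · rintro ⟨h, hA⟩
    exact (exists_max_avoiding_iff h).1 ((typeA_induce h).1 hA)
  · intro h
    exact ⟨branch_self hadj, (typeA_induce (branch_self hadj)).2
      ((exists_max_avoiding_iff (branch_self hadj)).2 h)⟩

lemma branchTypeB_iff (hadj : G.Adj r x) :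
    BranchTypeB G r x ↔
      muIn G (branchSet G r x \ {x}) + 1 = muIn G (branchSet G r x) := by
  have hb := muIn_le_diff_add_one (G := G) (S := branchSet G r x) (x := x)
  have hm : muIn G (branchSet G r x \ {x}) ≤ muIn G (branchSet G r x) :=
    muIn_mono Set.diff_subset
  have hAiff := branchTypeA_iff (G := G) hadj
  constructor
  · rintro ⟨h, hB⟩
    have hnA : ¬ BranchTypeA G r x := fun ⟨h', hA⟩ => hB hA
    rw [hAiff] at hnA
    omega
  · intro h
    refine ⟨branch_self hadj, fun hA => ?_⟩
    have : BranchTypeA G r x := ⟨branch_self hadj, hA⟩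
    rw [hAiff] at this
    omega

lemma exists_neighbor (htree : G.IsTree) (hcard : 2 ≤ Fintype.card V) :
    ∃ x, G.Adj r x := by
  obtain ⟨v, hv⟩ := Fintype.exists_ne_of_one_lt_card (by omega) r
  obtain ⟨x, hx, _⟩ := branch_exists htree.isConnected hv
  exact ⟨x, hx⟩

lemma sum_split (hx : G.Adj r x) (f : V → ℕ) :
    ∑ y ∈ (G.neighborSet r).toFinite.toFinset, f y =
      f x + ∑ y ∈ (G.neighborSet r \ {x}).toFinite.toFinset, f y := by
  classical
  have herase : (G.neighborSet r \ {x}).toFinite.toFinset =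
      ((G.neighborSet r).toFinite.toFinset).erase x := by
    ext y
    simp only [Set.Finite.mem_toFinset, Finset.mem_erase, Set.mem_diff,
      Set.mem_singleton_iff, mem_neighborSet]
    exact and_comm
  rw [herase]
  exact (Finset.add_sum_erase _ f (mem_Nf.2 hx)).symm

lemma prod_split (hx : G.Adj r x) (f : V → ℕ) :
    ∏ y ∈ (G.neighborSet r).toFinite.toFinset, f y =
      f x * ∏ y ∈ (G.neighborSet r \ {x}).toFinite.toFinset, f y := by
  classical
  have herase : (G.neighborSet r \ {x}).toFinite.toFinset =
      ((G.neighborSet r).toFinite.toFinset).erase x := by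
    ext y
    simp only [Set.Finite.mem_toFinset, Finset.mem_erase, Set.mem_diff,
      Set.mem_singleton_iff, mem_neighborSet]
    exact and_comm
  rw [herase]
  exact (Finset.mul_prod_erase _ f (mem_Nf.2 hx)).symm

lemma mu_univ_le {n : ℕ}
    (h : ∀ x, G.Adj r x → muIn G ((Set.univ \ {r}) \ {x}) + 1 ≤ n)
    (h0 : muIn G (Set.univ \ {r}) ≤ n) : muIn G Set.univ ≤ n := by
  apply muIn_le
  intro M hM
  by_cases hc : Covers M r
  · obtain ⟨x, hadj, hmem⟩ := edge_at_r hM hc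
    have h2 := (remove_edge_at_r hM hadj hmem).ncard_le_muIn
    have h3 : (M \ {s(r, x)}).ncard + 1 = M.ncard :=
      Set.ncard_diff_singleton_add_one hmem
    have := h x hadj
    omega
  · have hMU : MIn G (Set.univ \ {r}) M :=
      (mIn_diff_singleton_iff (Set.mem_univ r)).1 ⟨hM, hc⟩
    exact hMU.ncard_le_muIn.trans h0

lemma mu_univ_ge_cover (hadj : G.Adj r x) :
    muIn G ((Set.univ \ {r}) \ {x}) + 1 ≤ muIn G Set.univ := by
  obtain ⟨P, hP, hPc⟩ := maxIn_nonempty (G := G) (S := (Set.univ \ {r}) \ {x})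
  obtain ⟨hM, hnot⟩ := insert_edge_at_r hadj hP
  have := hM.ncard_le_muIn
  rwa [Set.ncard_insert_of_notMem hnot, hPc] at this

end Main

section Final
variable {V : Type} [Fintype V] {G : SimpleGraph V} {r x : V}

lemma caseA_mu (htree : G.IsTree) (hcard : 2 ≤ Fintype.card V)
    (hall : ∀ x, G.Adj r x →
      muIn G (branchSet G r x \ {x}) = muIn G (branchSet G r x)) :
    muIn G Set.univ =
      (∑ x ∈ (G.neighborSet r).toFinite.toFinset, muIn G (branchSet G r x)) + 1 ∧
    ∀ x, G.Adj r x → muIn G ((Set.univ \ {r}) \ {x}) =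
      ∑ x ∈ (G.neighborSet r).toFinite.toFinset, muIn G (branchSet G r x) := by
  have hUx : ∀ x, G.Adj r x → muIn G ((Set.univ \ {r}) \ {x}) =
      ∑ x ∈ (G.neighborSet r).toFinite.toFinset, muIn G (branchSet G r x) := by
    intro x hx
    rw [(mu_nm_del_root_x htree hx).1, hall x hx]
    exact (sum_split hx (fun y => muIn G (branchSet G r y))).symm
  refine ⟨le_antisymm ?_ ?_, hUx⟩
  · apply mu_univ_le
    · intro x hx; rw [hUx x hx]
    · rw [(mu_nm_del_root htree).1]; omega
  · obtain ⟨x0, hx0⟩ := exists_neighbor (r := r) htree hcard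
    have := mu_univ_ge_cover hx0
    rwa [hUx x0 hx0] at this

lemma caseB_mu (htree : G.IsTree) (hcard : 2 ≤ Fintype.card V)
    (hall : ∀ x, G.Adj r x →
      muIn G (branchSet G r x \ {x}) + 1 = muIn G (branchSet G r x)) :
    muIn G Set.univ =
      ∑ x ∈ (G.neighborSet r).toFinite.toFinset, muIn G (branchSet G r x) ∧
    ∀ x, G.Adj r x → muIn G ((Set.univ \ {r}) \ {x}) + 1 =
      ∑ x ∈ (G.neighborSet r).toFinite.toFinset, muIn G (branchSet G r x) := by
  have hUx : ∀ x, G.Adj r x → muIn G ((Set.univ \ {r}) \ {x}) + 1 =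
      ∑ x ∈ (G.neighborSet r).toFinite.toFinset, muIn G (branchSet G r x) := by
    intro x hx
    rw [(mu_nm_del_root_x htree hx).1, sum_split hx (fun y => muIn G (branchSet G r y)),
      ← hall x hx]
    omega
  refine ⟨le_antisymm ?_ ?_, hUx⟩
  · apply mu_univ_le
    · intro x hx; rw [hUx x hx]
    · rw [(mu_nm_del_root htree).1]
  · have := muIn_mono (G := G) (Set.diff_subset (s := Set.univ) (t := {r}))
    rwa [(mu_nm_del_root htree).1] at this

lemma caseA_typeB (htree : G.IsTree) (hcard : 2 ≤ Fintype.card V)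
    (hall : ∀ x, G.Adj r x →
      muIn G (branchSet G r x \ {x}) = muIn G (branchSet G r x)) :
    TypeB G r := by
  rintro ⟨M, hM, hcov⟩
  rw [maximumMatchings_eq_maxIn_univ] at hM
  obtain ⟨hM1, hM2⟩ := hM
  have hMU : MIn G (Set.univ \ {r}) M :=
    (mIn_diff_singleton_iff (Set.mem_univ r)).1 ⟨hM1, hcov⟩
  have h1 := hMU.ncard_le_muIn
  rw [(mu_nm_del_root htree).1] at h1
  rw [(caseA_mu htree hcard hall).1] at hM2
  omega

lemma caseB_typeA (htree : G.IsTree) (hcard : 2 ≤ Fintype.card V)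
    (hall : ∀ x, G.Adj r x →
      muIn G (branchSet G r x \ {x}) + 1 = muIn G (branchSet G r x)) :
    TypeA G r := by
  obtain ⟨M, hM, hMc⟩ := maxIn_nonempty (G := G) (S := Set.univ \ {r})
  refine ⟨M, ?_, ?_⟩
  · rw [maximumMatchings_eq_maxIn_univ]
    refine ⟨hM.mono (Set.subset_univ _), ?_⟩
    rw [hMc, (mu_nm_del_root htree).1, (caseB_mu htree hcard hall).1]
  · rintro ⟨e, he, hre⟩
    exact (hM.2.1 e he r hre).2 rfl

lemma mmCover_eq (htree : G.IsTree)
    (hkey : ∀ x, G.Adj r x →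
      muIn G Set.univ = muIn G ((Set.univ \ {r}) \ {x}) + 1) :
    mmCover G r = ∑ x ∈ (G.neighborSet r).toFinite.toFinset,
      nmIn G ((Set.univ \ {r}) \ {x}) := by
  classical
  rw [mmCover]
  have hset : {M | M ∈ MaximumMatchings G ∧ Covers M r} =
      ⋃ x ∈ (G.neighborSet r).toFinite.toFinset,
        {M | M ∈ MaxIn G Set.univ ∧ s(r, x) ∈ M} := by
    ext M
    simp only [Set.mem_setOf_eq, Set.mem_iUnion, maximumMatchings_eq_maxIn_univ]
    constructor
    · rintro ⟨hM, hc⟩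
      obtain ⟨x, hadj, hmem⟩ := edge_at_r hM.1 hc
      exact ⟨x, mem_Nf.2 hadj, hM, hmem⟩
    · rintro ⟨x, hx, hM, hmem⟩
      exact ⟨hM, ⟨_, hmem, Sym2.mem_mk_left r x⟩⟩
  rw [hset, ncard_finset_biUnion]
  · apply Finset.sum_congr rfl
    intro x hx
    have hadj : G.Adj r x := mem_Nf.1 hx
    have himg : (fun M => M \ ({s(r, x)} : Set (Sym2 V))) ''
        {M | M ∈ MaxIn G Set.univ ∧ s(r, x) ∈ M} =
        MaxIn G ((Set.univ \ {r}) \ {x}) := by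
      ext P
      constructor
      · rintro ⟨M, ⟨⟨hM1, hM2⟩, hmem⟩, rfl⟩
        refine ⟨remove_edge_at_r hM1 hadj hmem, ?_⟩
        show (M \ ({s(r, x)} : Set (Sym2 V))).ncard = muIn G ((Set.univ \ {r}) \ {x})
        have h3 := Set.ncard_diff_singleton_add_one hmem
        have h4 := (remove_edge_at_r hM1 hadj hmem).ncard_le_muIn
        have h5 := hkey x hadj
        have h6 := mu_univ_ge_cover (G := G) hadj
        omega
      · rintro ⟨hP, hPc⟩
        obtain ⟨hM, hnot⟩ := insert_edge_at_r hadj hP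
        refine ⟨insert (s(r, x)) P, ⟨⟨hM, ?_⟩, Set.mem_insert _ _⟩, ?_⟩
        · rw [Set.ncard_insert_of_notMem hnot, hPc, hkey x hadj]
        · simp only
          rw [Set.insert_diff_of_mem _ (Set.mem_singleton _), Set.diff_singleton_eq_self hnot]
    have hinj : Set.InjOn (fun M => M \ ({s(r, x)} : Set (Sym2 V)))
        {M | M ∈ MaxIn G Set.univ ∧ s(r, x) ∈ M} := by
      rintro M1 ⟨_, h1⟩ M2 ⟨_, h2⟩ heq
      simp only at heq
      have e1 : insert (s(r, x)) (M1 \ {s(r, x)}) = M1 := by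
        rw [Set.insert_diff_singleton, Set.insert_eq_self.2 h1]
      have e2 : insert (s(r, x)) (M2 \ {s(r, x)}) = M2 := by
        rw [Set.insert_diff_singleton, Set.insert_eq_self.2 h2]
      rw [← e1, ← e2, heq]
    rw [← Set.ncard_image_of_injOn hinj, himg]
    rfl
  · intro x hx y hy hxy
    rw [Set.disjoint_left]
    rintro M ⟨hM, hmx⟩ ⟨_, hmy⟩
    have hne : s(r, x) ≠ s(r, y) := by
      intro h
      rcases Sym2.eq_iff.1 h with ⟨_, h2⟩ | ⟨h1, _⟩
      · exact hxy h2
      · exact (mem_Nf.1 hy).ne h1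
    exact hM.1.2.2 hmx hmy hne r ⟨Sym2.mem_mk_left r x, Sym2.mem_mk_left r y⟩

end Final

/-- for a rooted tree `(T,r)` of order at least 2 all of whose branches
have the same type, the root has the other type, `m₀(T)` is the product of the `m`
values of the branches, and `m₁(T) = ∑_j m₀(T_j) ∏_{i ≠ j} m(T_i)`. -/
theorem stmt_14 {V : Type} [Fintype V] (G : SimpleGraph V) (r : V)
    (htree : G.IsTree) (horder : 2 ≤ Fintype.card V)
    (hsame : (∀ x : V, G.Adj r x → BranchTypeA G r x) ∨
             (∀ x : V, G.Adj r x → BranchTypeB G r x)) :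
    ((∀ x : V, G.Adj r x → BranchTypeA G r x) → TypeB G r) ∧
    ((∀ x : V, G.Adj r x → BranchTypeB G r x) → TypeA G r) ∧
    mm (G.induce {v | v ≠ r}) =
      (∏ x ∈ (G.neighborSet r).toFinite.toFinset, branchM G r x) ∧
    mmCover G r =
      ∑ x ∈ (G.neighborSet r).toFinite.toFinset,
        branchM0 G r x * ∏ y ∈ (G.neighborSet r \ {x}).toFinite.toFinset, branchM G r y := by
  classical
  refine ⟨?_, ?_, ?_, ?_⟩
  · intro hA
    exact caseA_typeB htree horder (fun x hx => (branchTypeA_iff hx).1 (hA x hx))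
  · intro hB
    exact caseB_typeA htree horder (fun x hx => (branchTypeB_iff hx).1 (hB x hx))
  · have hseteq : {v : V | v ≠ r} = Set.univ \ {r} := by ext v; simp
    rw [mm_induce, hseteq, (mu_nm_del_root htree).2]
    apply Finset.prod_congr rfl
    intro x hx
    rw [branchM, mm_induce]
  · have hkey : ∀ x, G.Adj r x →
        muIn G Set.univ = muIn G ((Set.univ \ {r}) \ {x}) + 1 := by
      rcases hsame with hA | hB
      · have h := caseA_mu htree horder (fun x hx => (branchTypeA_iff hx).1 (hA x hx))
        intro x hx
        rw [h.1, h.2 x hx]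
      · have h := caseB_mu htree horder (fun x hx => (branchTypeB_iff hx).1 (hB x hx))
        intro x hx
        rw [h.1]
        exact (h.2 x hx).symm
    rw [mmCover_eq htree hkey]
    apply Finset.sum_congr rfl
    intro x hx
    have hadj := mem_Nf.1 hx
    rw [(mu_nm_del_root_x htree hadj).2, branchM0, mm_induce]
    congr 1
    apply Finset.prod_congr rfl
    intro y hy
    rw [branchM, mm_induce]


end PaperMM
end
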